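/- arXiv:1502.07676 — 5 statements merged into one kernel-verified Lean document; each statement's English description precedes it below -/
import Mathlib

section
/- If f is a holomorphic automorphism of a bounded domain D in ℂ^d, z₀ ∈ D, f(z₀) = z₀, and the derivative of f at z₀ is the identity, then f is the identity map on D. -/
set_option maxHeartbeats 2000000

open Metric Set Function Real

section Helpers

variable {E : Type*} [NormedAddCommGroup E] [NormedSpace ℂ E] [CompleteSpace E]

/-- A vector whose norm is bounded by `C * ρ` for all small `ρ > 0` is zero. -/
lemma cartan_aux_small {a : E} {C ρ₂ : ℝ} (hρ₂ : 0 < ρ₂)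
    (h : ∀ ρ : ℝ, 0 < ρ → ρ ≤ ρ₂ → ‖a‖ ≤ C * ρ) : a = 0 := by
  by_contra ha
  have hna : 0 < ‖a‖ := norm_pos_iff.mpr ha
  have hC : 0 < C := by
    by_contra hC
    push_neg at hC
    have := h ρ₂ hρ₂ le_rfl
    nlinarith
  set ρ := min ρ₂ (‖a‖ / (2 * C)) with hρdef
  have hρpos : 0 < ρ := lt_min hρ₂ (by positivity)
  have := h ρ hρpos (min_le_left _ _)
  have hρle : ρ ≤ ‖a‖ / (2 * C) := min_le_right _ _
  have : ‖a‖ ≤ C * (‖a‖ / (2 * C)) := le_trans this (by nlinarith)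
  rw [mul_div_assoc'] at this
  rw [le_div_iff₀ (by positivity)] at this
  nlinarith

/-- Power-series representation of a function differentiable on a closed disc. -/
lemma cartan_aux_series {φ : ℂ → E} {r : ℝ} (hr : 0 < r)
    (h : DifferentiableOn ℂ φ (closedBall 0 r)) :
    HasFPowerSeriesOnBall φ (cauchyPowerSeries φ 0 r) 0 (ENNReal.ofReal r) := by
  have h' : DifferentiableOn ℂ φ (closedBall 0 (r.toNNReal : ℝ)) := by
    rwa [Real.coe_toNNReal _ hr.le]
  have hb := h'.hasFPowerSeriesOnBall (by simpa using hr)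
  rw [Real.coe_toNNReal _ hr.le] at hb
  simpa [ENNReal.ofReal] using hb

/-- Cauchy's inequality for the coefficients of a power series at 0. -/
lemma cartan_aux_coeff_bound {φ : ℂ → E} {ρ : ℝ} (hρ : 0 < ρ)
    (hφ : DifferentiableOn ℂ φ (closedBall 0 ρ))
    {p : FormalMultilinearSeries ℂ ℂ E} (hp : HasFPowerSeriesAt φ p 0)
    {C : ℝ} (hC : ∀ t : ℂ, ‖t‖ = ρ → ‖φ t‖ ≤ C) (k : ℕ) :
    ‖p.coeff k‖ ≤ C / ρ ^ k := by
  have hball := cartan_aux_series hρ hφ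
  have hpq : p = cauchyPowerSeries φ 0 ρ :=
    hp.eq_formalMultilinearSeries hball.hasFPowerSeriesAt
  have hC0 : 0 ≤ C := by
    refine le_trans (norm_nonneg (φ (circleMap 0 ρ 0))) (hC _ ?_)
    simp [Real.norm_eq_abs, abs_of_pos hρ]
  have hsphere : ∀ θ : ℝ, ‖φ (circleMap 0 ρ θ)‖ ≤ C := fun θ => by
    refine hC _ ?_
    rw [norm_circleMap_zero, abs_of_pos hρ]
  have hcont : ContinuousOn (fun θ : ℝ => ‖φ (circleMap 0 ρ θ)‖) (uIcc 0 (2 * π)) := by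
    apply ContinuousOn.norm
    apply hφ.continuousOn.comp (continuous_circleMap 0 ρ).continuousOn
    intro θ _
    simp [mem_closedBall, dist_eq_norm, norm_circleMap_zero, abs_of_pos hρ]
  have hint : (∫ θ : ℝ in (0)..2 * π, ‖φ (circleMap 0 ρ θ)‖) ≤ 2 * π * C := by
    have h1 : (∫ θ : ℝ in (0)..2 * π, ‖φ (circleMap 0 ρ θ)‖) ≤ ∫ _ : ℝ in (0)..2 * π, C := by
      apply intervalIntegral.integral_mono_on Real.two_pi_pos.le
      · exact hcont.intervalIntegrable
      · exact intervalIntegrable_const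
      · exact fun θ _ => hsphere θ
    simpa using h1
  calc ‖p.coeff k‖ = ‖cauchyPowerSeries φ 0 ρ k‖ := by
        rw [hpq, FormalMultilinearSeries.norm_apply_eq_norm_coef]
    _ ≤ ((2 * π)⁻¹ * ∫ θ : ℝ in (0)..2 * π, ‖φ (circleMap 0 ρ θ)‖) * |ρ|⁻¹ ^ k :=
        norm_cauchyPowerSeries_le φ 0 ρ k
    _ ≤ ((2 * π)⁻¹ * (2 * π * C)) * |ρ|⁻¹ ^ k := by
        gcongr
    _ = C / ρ ^ k := by
        rw [abs_of_pos hρ]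
        have h2π : (2 * π) ≠ 0 := by positivity
        field_simp
        rw [one_div, inv_pow, mul_assoc, inv_mul_cancel₀ (by positivity), mul_one]


/-- Differentiability of a one-variable slice. -/
lemma cartan_aux_slice_diff {f : E → E} {D : Set E} (hf : DifferentiableOn ℂ f D)
    {x v : E} {ρ : ℝ} (h : ∀ t : ℂ, ‖t‖ ≤ ρ → x + t • v ∈ D) :
    DifferentiableOn ℂ (fun t : ℂ => f (x + t • v)) (closedBall 0 ρ) := by
  apply DifferentiableOn.comp hf
  · exact (((differentiable_fun_id (𝕜 := ℂ)).smul_const v).const_add x).differentiableOn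
  · intro t ht
    exact h t (by simpa [mem_closedBall, dist_eq_norm] using ht)

/-- Derivative of a one-variable slice at 0. -/
lemma cartan_aux_slice_deriv {f : E → E} {D : Set E} (hD : IsOpen D)
    (hf : DifferentiableOn ℂ f D) {x : E} (hx : x ∈ D) (v : E) :
    HasDerivAt (fun t : ℂ => f (x + t • v)) (fderiv ℂ f x v) 0 := by
  have h1 : HasDerivAt (fun t : ℂ => x + t • v) v 0 := by
    simpa using ((hasDerivAt_id (0 : ℂ)).smul_const v).const_add x
  have h2 : HasFDerivAt f (fderiv ℂ f x) (x + (0 : ℂ) • v) := by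
    rw [show x + (0 : ℂ) • v = x by simp]
    exact (hf.differentiableAt (hD.mem_nhds hx)).hasFDerivAt
  exact h2.comp_hasDerivAt 0 h1

/-- Cauchy bound for the full derivative of a bounded holomorphic function. -/
lemma cartan_aux_fderiv_bound {f : E → E} {D : Set E} (hD : IsOpen D)
    (hf : DifferentiableOn ℂ f D) {M : ℝ} (hM : ∀ z ∈ D, ‖f z‖ ≤ M)
    {x : E} {ρ : ℝ} (hρ : 0 < ρ) (hx : closedBall x ρ ⊆ D) :
    ‖fderiv ℂ f x‖ ≤ M / ρ := by
  have hxD : x ∈ D := hx (mem_closedBall_self hρ.le)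
  have hM0 : 0 ≤ M := le_trans (norm_nonneg _) (hM x hxD)
  refine ContinuousLinearMap.opNorm_le_bound _ (by positivity) fun v => ?_
  rcases eq_or_ne v 0 with rfl | hv
  · simp
  · have hvpos : 0 < ‖v‖ := norm_pos_iff.mpr hv
    set r : ℝ := ρ / ‖v‖ with hrdef
    have hrpos : 0 < r := by positivity
    have hdom : ∀ t : ℂ, ‖t‖ ≤ r → x + t • v ∈ D := by
      intro t ht
      apply hx
      rw [mem_closedBall, dist_eq_norm, add_sub_cancel_left, norm_smul]
      calc ‖t‖ * ‖v‖ ≤ r * ‖v‖ := by gcongr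
        _ = ρ := by rw [hrdef, div_mul_cancel₀ _ hvpos.ne']
    have hdiff := cartan_aux_slice_diff hf hdom
    have hball := cartan_aux_series hrpos hdiff
    have hcoeff1 : (cauchyPowerSeries (fun t : ℂ => f (x + t • v)) 0 r).coeff 1
        = fderiv ℂ f x v := by
      have hd := cartan_aux_slice_deriv hD hf hxD v
      have h3 := hball.hasFPowerSeriesAt.deriv
      rw [hd.deriv] at h3
      rw [h3]
      simp [FormalMultilinearSeries.apply_eq_pow_smul_coeff]
    have hbound := cartan_aux_coeff_bound hrpos hdiff hball.hasFPowerSeriesAt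
      (C := M) (fun t ht => hM _ (hdom t ht.le)) 1
    rw [hcoeff1] at hbound
    calc ‖fderiv ℂ f x v‖ ≤ M / r ^ 1 := hbound
      _ = M / ρ * ‖v‖ := by rw [hrdef]; field_simp

/-- Quantitative continuity of the derivative of a bounded holomorphic function. -/
lemma cartan_aux_fderiv_lip {f : E → E} {D : Set E} (hD : IsOpen D)
    (hf : DifferentiableOn ℂ f D) {M : ℝ} (hM : ∀ z ∈ D, ‖f z‖ ≤ M)
    {c : E} {R : ℝ} (hR : 0 < R) (hc : closedBall c (4 * R) ⊆ D)
    {w : E} (hw : w ∈ closedBall c R) :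
    ‖fderiv ℂ f w - fderiv ℂ f c‖ ≤ M / R ^ 2 * ‖w - c‖ := by
  have hcD : c ∈ D := hc (mem_closedBall_self (by positivity))
  have hM0 : 0 ≤ M := le_trans (norm_nonneg _) (hM c hcD)
  have hsub2 : closedBall c (2 * R) ⊆ D := fun y hy =>
    hc (closedBall_subset_closedBall (by nlinarith) hy)
  -- f is (M/R)-Lipschitz on closedBall c (2R)
  have hLip : ∀ a ∈ closedBall c (2 * R), ∀ b ∈ closedBall c (2 * R),
      ‖f b - f a‖ ≤ M / R * ‖b - a‖ := by
    intro a ha b hb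
    refine (convex_closedBall c (2 * R)).norm_image_sub_le_of_norm_fderiv_le
      (fun x hx => hf.differentiableAt (hD.mem_nhds (hsub2 hx))) ?_ ha hb
    intro x hx
    refine cartan_aux_fderiv_bound hD hf hM hR (fun y hy => hc ?_)
    rw [mem_closedBall] at hx hy ⊢
    calc dist y c ≤ dist y x + dist x c := dist_triangle y x c
      _ ≤ R + 2 * R := by gcongr
      _ ≤ 4 * R := by nlinarith
  refine ContinuousLinearMap.opNorm_le_bound _ (by positivity) fun e => ?_
  rcases eq_or_ne e 0 with rfl | he
  · simp
  · have hepos : 0 < ‖e‖ := norm_pos_iff.mpr he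
    set r : ℝ := R / ‖e‖ with hrdef
    have hrpos : 0 < r := by positivity
    have hdomw : ∀ t : ℂ, ‖t‖ ≤ r → w + t • e ∈ closedBall c (2 * R) := by
      intro t ht
      rw [mem_closedBall] at hw ⊢
      have h1 : ‖t • e‖ ≤ R := by
        rw [norm_smul]
        calc ‖t‖ * ‖e‖ ≤ r * ‖e‖ := by gcongr
          _ = R := by rw [hrdef, div_mul_cancel₀ _ hepos.ne']
      calc dist (w + t • e) c ≤ dist (w + t • e) w + dist w c := dist_triangle _ _ _
        _ ≤ R + R := by
            refine add_le_add ?_ hw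
            rw [dist_eq_norm, add_sub_cancel_left]
            exact h1
        _ ≤ 2 * R := by nlinarith
    have hdomc : ∀ t : ℂ, ‖t‖ ≤ r → c + t • e ∈ closedBall c (2 * R) := by
      intro t ht
      have := hdomw t ht
      rw [mem_closedBall, dist_eq_norm, add_sub_cancel_left, norm_smul]
      calc ‖t‖ * ‖e‖ ≤ r * ‖e‖ := by gcongr
        _ = R := by rw [hrdef, div_mul_cancel₀ _ hepos.ne']
        _ ≤ 2 * R := by nlinarith
    have hdifw := cartan_aux_slice_diff hf (fun t ht => hsub2 (hdomw t ht))
    have hdifc := cartan_aux_slice_diff hf (fun t ht => hsub2 (hdomc t ht))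
    have hdifψ : DifferentiableOn ℂ
        ((fun t : ℂ => f (w + t • e)) - fun t : ℂ => f (c + t • e)) (closedBall 0 r) :=
      hdifw.sub hdifc
    have hballw := cartan_aux_series hrpos hdifw
    have hballc := cartan_aux_series hrpos hdifc
    have hψ : HasFPowerSeriesAt
        ((fun t : ℂ => f (w + t • e)) - fun t : ℂ => f (c + t • e))
        (cauchyPowerSeries (fun t : ℂ => f (w + t • e)) 0 r -
          cauchyPowerSeries (fun t : ℂ => f (c + t • e)) 0 r) 0 :=
      hballw.hasFPowerSeriesAt.sub hballc.hasFPowerSeriesAt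
    have hψbound : ∀ t : ℂ, ‖t‖ = r →
        ‖((fun t : ℂ => f (w + t • e)) - fun t : ℂ => f (c + t • e)) t‖ ≤ M / R * ‖w - c‖ := by
      intro t ht
      have := hLip _ (hdomc t ht.le) _ (hdomw t ht.le)
      simpa [Pi.sub_apply, add_sub_add_right_eq_sub] using this
    have hbound := cartan_aux_coeff_bound hrpos hdifψ hψ hψbound 1
    have hcoeffw : (cauchyPowerSeries (fun t : ℂ => f (w + t • e)) 0 r).coeff 1
        = fderiv ℂ f w e := by
      have hd := cartan_aux_slice_deriv hD hf (hsub2 (hdomw 0 (by simp [hrpos.le]))) e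
      rw [show w + (0:ℂ) • e = w by simp] at hd
      have h3 := hballw.hasFPowerSeriesAt.deriv
      rw [hd.deriv] at h3
      rw [h3]
      simp [FormalMultilinearSeries.apply_eq_pow_smul_coeff]
    have hcoeffc : (cauchyPowerSeries (fun t : ℂ => f (c + t • e)) 0 r).coeff 1
        = fderiv ℂ f c e := by
      have hd := cartan_aux_slice_deriv hD hf (hsub2 (hdomc 0 (by simp [hrpos.le]))) e
      rw [show c + (0:ℂ) • e = c by simp] at hd
      have h3 := hballc.hasFPowerSeriesAt.deriv
      rw [hd.deriv] at h3
      rw [h3]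
      simp [FormalMultilinearSeries.apply_eq_pow_smul_coeff]
    have hcoeffsub : (cauchyPowerSeries (fun t : ℂ => f (w + t • e)) 0 r -
        cauchyPowerSeries (fun t : ℂ => f (c + t • e)) 0 r).coeff 1
        = fderiv ℂ f w e - fderiv ℂ f c e := by
      rw [← hcoeffw, ← hcoeffc]
      rfl
    rw [hcoeffsub] at hbound
    have : ‖(fderiv ℂ f w - fderiv ℂ f c) e‖ = ‖fderiv ℂ f w e - fderiv ℂ f c e‖ := by
      simp [ContinuousLinearMap.sub_apply]
    rw [this]
    calc ‖fderiv ℂ f w e - fderiv ℂ f c e‖ ≤ M / R * ‖w - c‖ / r ^ 1 := hbound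
      _ = M / R ^ 2 * ‖w - c‖ * ‖e‖ := by
          rw [hrdef]
          field_simp

lemma cartan_aux_mem_eball {t : ℂ} {ρ : ℝ} (h : ‖t‖ < ρ) :
    t ∈ Metric.eball (0 : ℂ) (ENNReal.ofReal ρ) := by
  rw [Metric.mem_eball, edist_dist]
  refine (ENNReal.ofReal_lt_ofReal_iff (lt_of_le_of_lt (norm_nonneg t) h)).mpr ?_
  simpa [dist_eq_norm] using h

/-- The local version of Cartan's uniqueness theorem. -/
lemma cartan_aux_local {f : E → E} {D : Set E} (hD : IsOpen D)
    (hf : DifferentiableOn ℂ f D) (hfD : Set.MapsTo f D D)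
    {M : ℝ} (hM : ∀ z ∈ D, ‖z‖ ≤ M)
    {c : E} (hc : c ∈ D) (hfix : f c = c)
    (hderiv : fderiv ℂ f c = ContinuousLinearMap.id ℂ E)
    {R : ℝ} (hRD : ball c R ⊆ D) : Set.EqOn f id (ball c R) := by
  have hM0 : 0 ≤ M := le_trans (norm_nonneg c) (hM c hc)
  have hMf : ∀ z ∈ D, ‖f z‖ ≤ M := fun z hz => hM _ (hfD hz)
  obtain ⟨ε, hεpos, hεD⟩ : ∃ ε > 0, ball c ε ⊆ D := Metric.isOpen_iff.mp hD c hc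
  set ρ₀ : ℝ := min (ε / 10) 1 with hρ₀def
  have hρ₀pos : 0 < ρ₀ := lt_min (by positivity) one_pos
  have hρ₀1 : ρ₀ ≤ 1 := min_le_right _ _
  have h5 : closedBall c (5 * ρ₀) ⊆ D := by
    refine subset_trans ?_ hεD
    intro y hy
    rw [mem_closedBall] at hy
    rw [mem_ball]
    have h10 : ρ₀ ≤ ε / 10 := min_le_left _ _
    calc dist y c ≤ 5 * ρ₀ := hy
      _ ≤ 5 * (ε / 10) := by gcongr
      _ < ε := by nlinarith
  -- iterates
  set F : ℕ → E → E := fun n => f^[n + 1] with hFdef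
  have hFrec : ∀ n z, F (n + 1) z = f (F n z) := fun n z =>
    Function.iterate_succ_apply' f (n + 1) z
  have hF0 : F 0 = f := by
    funext z; simp [hFdef]
  have hFD : ∀ n, Set.MapsTo (F n) D D := by
    intro n
    induction n with
    | zero => rw [hF0]; exact hfD
    | succ n ih => intro z hz; rw [hFrec]; exact hfD (ih hz)
  have hFd : ∀ n, DifferentiableOn ℂ (F n) D := by
    intro n
    induction n with
    | zero => rw [hF0]; exact hf
    | succ n ih =>
      have hcomp : F (n + 1) = f ∘ F n := funext (hFrec n)
      rw [hcomp]
      exact hf.comp ih (hFD n)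
  have hFfix : ∀ n, F n c = c := by
    intro n
    induction n with
    | zero => rw [hF0]; exact hfix
    | succ n ih => rw [hFrec, ih, hfix]
  have hFderiv : ∀ n, fderiv ℂ (F n) c = ContinuousLinearMap.id ℂ E := by
    intro n
    induction n with
    | zero => rw [hF0]; exact hderiv
    | succ n ih =>
      have hcomp : F (n + 1) = f ∘ F n := funext (hFrec n)
      have hdf : DifferentiableAt ℂ f (F n c) := by
        rw [hFfix n]; exact hf.differentiableAt (hD.mem_nhds hc)
      have hdF : DifferentiableAt ℂ (F n) c := (hFd n).differentiableAt (hD.mem_nhds hc)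
      rw [hcomp, fderiv_comp c hdf hdF, hFfix n, hderiv, ih, ContinuousLinearMap.id_comp]
  -- the key coefficient claim
  have key : ∀ (v : E) (p : FormalMultilinearSeries ℂ ℂ E),
      HasFPowerSeriesAt (fun t : ℂ => f (c + t • v) - (c + t • v)) p 0 →
      ∀ k, p.coeff k = 0 := by
    intro v p hp
    set σ : ℝ := ρ₀ / (‖v‖ + 1) with hσdef
    have hσpos : 0 < σ := by positivity
    have hσmul : σ * (‖v‖ + 1) = ρ₀ := div_mul_cancel₀ _ (by positivity)
    have hσ1 : σ ≤ 1 := by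
      rw [hσdef, div_le_one (by positivity)]
      have := norm_nonneg v
      linarith
    have hσρ₀ : σ ≤ ρ₀ := by nlinarith [norm_nonneg v, hσpos.le]
    have hdom : ∀ t : ℂ, ‖t‖ ≤ σ → c + t • v ∈ closedBall c ρ₀ := by
      intro t ht
      rw [mem_closedBall, dist_eq_norm, add_sub_cancel_left, norm_smul]
      nlinarith [norm_nonneg v, norm_nonneg t]
    have hsubρ₀ : closedBall c ρ₀ ⊆ D := fun y hy =>
      h5 (closedBall_subset_closedBall (by nlinarith) hy)
    have hdomD : ∀ t : ℂ, ‖t‖ ≤ σ → c + t • v ∈ D := fun t ht => hsubρ₀ (hdom t ht)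
    set H : ℕ → ℂ → E := fun n t => F n (c + t • v) - (c + t • v) with hHdef
    have hHdiff : ∀ n, DifferentiableOn ℂ (H n) (closedBall 0 σ) := fun n =>
      (cartan_aux_slice_diff (hFd n) hdomD).sub
        ((((differentiable_fun_id (𝕜 := ℂ)).smul_const v).const_add c).differentiableOn)
    set P : ℕ → FormalMultilinearSeries ℂ ℂ E := fun n => cauchyPowerSeries (H n) 0 σ with hPdef
    have hp_ : ∀ n, HasFPowerSeriesOnBall (H n) (P n) 0 (ENNReal.ofReal σ) := fun n =>
      cartan_aux_series hσpos (hHdiff n)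
    set M₁ : ℝ := M + (‖c‖ + ρ₀) with hM₁def
    have hM₁0 : 0 ≤ M₁ := by positivity
    have hM₁ : ∀ n (t : ℂ), ‖t‖ ≤ σ → ‖H n t‖ ≤ M₁ := by
      intro n t ht
      have hx : c + t • v ∈ D := hdomD t ht
      have h1 : ‖F n (c + t • v)‖ ≤ M := hM _ (hFD n hx)
      have h2 : ‖c + t • v‖ ≤ ‖c‖ + ρ₀ := by
        refine le_trans (norm_add_le c (t • v)) ?_
        rw [norm_smul]
        nlinarith [norm_nonneg v, norm_nonneg t]
      calc ‖H n t‖ ≤ ‖F n (c + t • v)‖ + ‖c + t • v‖ := norm_sub_le _ _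
        _ ≤ M₁ := by rw [hM₁def]; linarith
    have hcb : ∀ n k, ‖(P n).coeff k‖ ≤ M₁ / σ ^ k := fun n k =>
      cartan_aux_coeff_bound hσpos (hHdiff n) (hp_ n).hasFPowerSeriesAt
        (fun t ht => hM₁ n t ht.le) k
    have hc0 : ∀ n, (P n).coeff 0 = 0 := by
      intro n
      have h0 : H n 0 = 0 := by simp [hHdef, hFfix n]
      have := (hp_ n).hasFPowerSeriesAt.coeff_zero 1
      rw [h0] at this
      exact this
    have hc1 : ∀ n, (P n).coeff 1 = 0 := by
      intro n
      have hda : HasDerivAt (fun t : ℂ => F n (c + t • v)) (fderiv ℂ (F n) c v) 0 :=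
        cartan_aux_slice_deriv hD (hFd n) hc v
      have hdb : HasDerivAt (fun t : ℂ => c + t • v) v 0 := by
        simpa using ((hasDerivAt_id (0 : ℂ)).smul_const v).const_add c
      have hd : HasDerivAt (H n) 0 0 := by
        have := hda.sub hdb
        rw [hFderiv n] at this
        simpa [hHdef, Pi.sub_def] using this
      have h3 := (hp_ n).hasFPowerSeriesAt.deriv
      rw [hd.deriv] at h3
      have h4 : (P n) 1 (fun _ => (1:ℂ)) = 0 := h3.symm
      rw [FormalMultilinearSeries.apply_eq_pow_smul_coeff] at h4
      simpa using h4
    have main : ∀ k, 2 ≤ k → (P 0).coeff k = 0 := by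
      intro k
      induction k using Nat.strong_induction_on with
      | _ k ih =>
      intro hk2
      have hlow : ∀ j, j < k → (P 0).coeff j = 0 := by
        intro j hj
        match j with
        | 0 => exact hc0 0
        | 1 => exact hc1 0
        | (j + 2) => exact ih (j + 2) hj (by omega)
      set Cs : ℝ := 2 ^ (k + 1) * M₁ / σ ^ k with hCsdef
      have hCs0 : 0 ≤ Cs := by positivity
      have claimA : ∀ n, (∀ j, j < k → (P n).coeff j = 0) ∧
          (P n).coeff k = (n + 1) • (P 0).coeff k := by
        intro n
        induction n with
        | zero => exact ⟨hlow, (one_smul ℕ _).symm⟩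
        | succ n ihn =>
          obtain ⟨ih1, ih2⟩ := ihn
          have tail : ∀ t : ℂ, ‖t‖ ≤ σ / 2 → ‖H n t‖ ≤ Cs * ‖t‖ ^ k := by
            intro t ht
            have htσ : ‖t‖ < σ := lt_of_le_of_lt ht (by nlinarith)
            have hs := (hp_ n).hasSum (cartan_aux_mem_eball htσ)
            rw [zero_add] at hs
            have hfrac : ‖t‖ / σ ≤ 1 / 2 := by
              rw [div_le_div_iff₀ hσpos two_pos]
              nlinarith
            have hfrac0 : 0 ≤ ‖t‖ / σ := by positivity
            have hbnd : ∀ j : ℕ, ‖(P n) j fun _ => t‖ ≤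
                M₁ * (‖t‖ / σ) ^ k * 2 ^ k * (1 / 2 : ℝ) ^ j := by
              intro j
              rw [FormalMultilinearSeries.apply_eq_pow_smul_coeff, norm_smul, norm_pow]
              rcases lt_or_ge j k with hjk | hjk
              · rw [ih1 j hjk, norm_zero, mul_zero]
                positivity
              · obtain ⟨m, rfl⟩ := Nat.exists_eq_add_of_le hjk
                have h1 : ‖t‖ ^ (k + m) * ‖(P n).coeff (k + m)‖ ≤
                    ‖t‖ ^ (k + m) * (M₁ / σ ^ (k + m)) := by
                  gcongr
                  exact hcb n (k + m)
                refine le_trans h1 ?_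
                have he : ‖t‖ ^ (k + m) * (M₁ / σ ^ (k + m)) = M₁ * (‖t‖ / σ) ^ (k + m) := by
                  rw [div_pow]
                  ring
                rw [he, pow_add]
                have h2 : (‖t‖ / σ) ^ m ≤ (1 / 2 : ℝ) ^ m := pow_le_pow_left₀ hfrac0 hfrac m
                have h3 : (2:ℝ) ^ k * (1 / 2 : ℝ) ^ (k + m) = (1 / 2 : ℝ) ^ m := by
                  rw [pow_add]
                  field_simp
                  rw [← mul_pow]; norm_num
                rw [mul_assoc, h3]
                have h4 : 0 ≤ M₁ * (‖t‖ / σ) ^ k := by positivity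
                calc M₁ * ((‖t‖ / σ) ^ k * (‖t‖ / σ) ^ m)
                    = M₁ * (‖t‖ / σ) ^ k * (‖t‖ / σ) ^ m := by ring
                  _ ≤ M₁ * (‖t‖ / σ) ^ k * (1 / 2 : ℝ) ^ m := by gcongr
            have hgsum : HasSum (fun j : ℕ => M₁ * (‖t‖ / σ) ^ k * 2 ^ k * (1 / 2 : ℝ) ^ j)
                (M₁ * (‖t‖ / σ) ^ k * 2 ^ k * 2) := hasSum_geometric_two.mul_left _
            have hle : ‖H n t‖ ≤ M₁ * (‖t‖ / σ) ^ k * 2 ^ k * 2 := by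
              rw [← hs.tsum_eq]
              exact tsum_of_norm_bounded hgsum hbnd
            refine le_trans hle (le_of_eq ?_)
            rw [hCsdef, div_pow]
            field_simp
            ring
          set ρm : ℝ := min (σ / 2) (ρ₀ / (‖v‖ + Cs + 1)) with hρmdef
          have hρmpos : 0 < ρm := lt_min (by positivity) (by positivity)
          have hρm1 : ρm ≤ 1 := le_trans (min_le_left _ _) (by nlinarith)
          set K : ℝ := M / ρ₀ ^ 2 * (‖v‖ + Cs) * Cs with hKdef
          have hK0 : 0 ≤ K := by positivity
          have hE : ∀ t : ℂ, ‖t‖ ≤ ρm → ‖(H (n + 1) - H n - H 0) t‖ ≤ K * ‖t‖ ^ (k + 1) := by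
            intro t ht
            have htσ2 : ‖t‖ ≤ σ / 2 := le_trans ht (min_le_left _ _)
            have htσ : ‖t‖ ≤ σ := by nlinarith
            have ht1 : ‖t‖ ≤ 1 := le_trans htσ hσ1
            have hHn := tail t htσ2
            have hHle : ‖H n t‖ ≤ Cs * ‖t‖ := by
              refine le_trans hHn ?_
              have : ‖t‖ ^ k ≤ ‖t‖ ^ 1 := pow_le_pow_of_le_one (norm_nonneg t) ht1 (by omega)
              calc Cs * ‖t‖ ^ k ≤ Cs * ‖t‖ ^ 1 := by gcongr
                _ = Cs * ‖t‖ := by ring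
            set w : E := c + t • v with hwdef
            set γ : E := F n w with hγdef
            have hγ : γ = w + H n t := by simp [hHdef, hγdef, hwdef]
            set δ : ℝ := (‖v‖ + Cs) * ‖t‖ with hδdef
            have hδ0 : 0 ≤ δ := by positivity
            have hδρ₀ : δ ≤ ρ₀ := by
              have h1 : ‖t‖ ≤ ρ₀ / (‖v‖ + Cs + 1) := le_trans ht (min_le_right _ _)
              have h2 : δ ≤ (‖v‖ + Cs) * (ρ₀ / (‖v‖ + Cs + 1)) := by
                rw [hδdef]; gcongr
              refine le_trans h2 ?_
              rw [mul_div_assoc', div_le_iff₀ (by positivity)]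
              nlinarith [norm_nonneg v]
            have hwin : w ∈ closedBall c δ := by
              rw [mem_closedBall, dist_eq_norm, hwdef, add_sub_cancel_left, norm_smul]
              nlinarith [norm_nonneg v, norm_nonneg t]
            have hγin : γ ∈ closedBall c δ := by
              rw [mem_closedBall, dist_eq_norm, hγ]
              have h1 : ‖w + H n t - c‖ ≤ ‖w - c‖ + ‖H n t‖ := by
                rw [show w + H n t - c = (w - c) + H n t by abel]
                exact norm_add_le _ _
              refine le_trans h1 ?_
              have h2 : ‖w - c‖ ≤ ‖v‖ * ‖t‖ := by
                rw [hwdef, add_sub_cancel_left, norm_smul]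
                nlinarith [norm_nonneg v, norm_nonneg t]
              rw [hδdef]
              nlinarith
            have hsubδ : closedBall c δ ⊆ D := fun y hy =>
              hsubρ₀ (closedBall_subset_closedBall hδρ₀ hy)
            have hgb : ∀ x ∈ closedBall c δ, ‖fderiv ℂ (fun z => f z - z) x‖ ≤
                M / ρ₀ ^ 2 * δ := by
              intro x hx
              have hxD : x ∈ D := hsubδ hx
              have h1 : DifferentiableAt ℂ f x := hf.differentiableAt (hD.mem_nhds hxD)
              have hfd : fderiv ℂ (fun z : E => f z - z) x
                  = fderiv ℂ f x - ContinuousLinearMap.id ℂ E := by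
                rw [fderiv_fun_sub h1 differentiableAt_fun_id, fderiv_fun_id]
              rw [hfd, ← hderiv]
              have hx' : x ∈ closedBall c ρ₀ := closedBall_subset_closedBall hδρ₀ hx
              have h4 : closedBall c (4 * ρ₀) ⊆ D := fun y hy =>
                h5 (closedBall_subset_closedBall (by nlinarith) hy)
              refine le_trans (cartan_aux_fderiv_lip hD hf hMf hρ₀pos h4 hx') ?_
              have : ‖x - c‖ ≤ δ := by rw [← dist_eq_norm]; exact hx
              gcongr
            have hmv := (convex_closedBall c δ).norm_image_sub_le_of_norm_fderiv_le
              (fun x hx => (hf.differentiableAt (hD.mem_nhds (hsubδ hx))).sub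
                differentiableAt_fun_id) hgb hwin hγin
            have hEt : (H (n + 1) - H n - H 0) t = (f γ - γ) - (f w - w) := by
              simp only [Pi.sub_apply, hHdef, hγdef, hwdef]
              rw [hFrec n, hF0]
              abel
            rw [hEt]
            have hγw : ‖γ - w‖ = ‖H n t‖ := by rw [hγ, add_sub_cancel_left]
            calc ‖f γ - γ - (f w - w)‖ ≤ M / ρ₀ ^ 2 * δ * ‖γ - w‖ := hmv
              _ = M / ρ₀ ^ 2 * δ * ‖H n t‖ := by rw [hγw]
              _ ≤ M / ρ₀ ^ 2 * ((‖v‖ + Cs) * ‖t‖) * (Cs * ‖t‖ ^ k) := by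
                  rw [hδdef]
                  gcongr
              _ = K * ‖t‖ ^ (k + 1) := by rw [hKdef]; ring
          have hqz : ∀ j, j ≤ k → (P (n + 1) - P n - P 0).coeff j = 0 := by
            intro j hj
            apply cartan_aux_small hρmpos (C := K)
            intro ρ hρpos hρle
            have hρ1 : ρ ≤ 1 := le_trans hρle hρm1
            have hρσ : ρ ≤ σ := le_trans hρle (le_trans (min_le_left _ _) (by nlinarith))
            have hEdiff : DifferentiableOn ℂ (H (n + 1) - H n - H 0) (closedBall 0 ρ) :=
              ((((hHdiff (n + 1)).sub (hHdiff n)).sub (hHdiff 0)).mono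
                (closedBall_subset_closedBall hρσ))
            have hqp : HasFPowerSeriesAt (H (n + 1) - H n - H 0) (P (n + 1) - P n - P 0) 0 :=
              ((hp_ (n + 1)).hasFPowerSeriesAt.sub (hp_ n).hasFPowerSeriesAt).sub
                (hp_ 0).hasFPowerSeriesAt
            have hb := cartan_aux_coeff_bound hρpos hEdiff hqp (C := K * ρ ^ (k + 1))
              (fun t htρ => by rw [← htρ]; exact hE t (le_of_eq htρ |>.trans hρle)) j
            refine le_trans hb ?_
            have hsplit : ρ ^ (k + 1) = ρ ^ j * ρ ^ (k + 1 - j) := by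
              rw [← pow_add]
              congr 1
              omega
            rw [hsplit, show K * (ρ ^ j * ρ ^ (k + 1 - j)) = (K * ρ ^ (k + 1 - j)) * ρ ^ j by ring,
              mul_div_cancel_right₀ _ (by positivity : (ρ:ℝ) ^ j ≠ 0)]
            have h2 : ρ ^ (k + 1 - j) ≤ ρ ^ 1 :=
              pow_le_pow_of_le_one hρpos.le hρ1 (by omega)
            calc K * ρ ^ (k + 1 - j) ≤ K * ρ ^ 1 := by gcongr
              _ = K * ρ := by ring
          have hrec : ∀ j, j ≤ k → (P (n + 1)).coeff j = (P n).coeff j + (P 0).coeff j := by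
            intro j hj
            have h1 := hqz j hj
            have h2 : (P (n + 1) - P n - P 0).coeff j
                = (P (n + 1)).coeff j - (P n).coeff j - (P 0).coeff j := rfl
            rw [h2, sub_sub, sub_eq_zero] at h1
            exact h1
          constructor
          · intro j hj
            rw [hrec j hj.le, ih1 j hj, hlow j hj, add_zero]
          · rw [hrec k le_rfl, ih2,
              show ((n + 1 + 1) : ℕ) • (P 0).coeff k
                  = (n + 1) • (P 0).coeff k + (P 0).coeff k from succ_nsmul _ _]
      by_contra ha
      have hapos : 0 < ‖(P 0).coeff k‖ := norm_pos_iff.mpr ha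
      obtain ⟨n, hn⟩ := exists_nat_gt ((M₁ / σ ^ k) / ‖(P 0).coeff k‖)
      have h1 := (claimA n).2
      have h2 := hcb n k
      rw [h1, ← Nat.cast_smul_eq_nsmul ℝ, norm_smul, Real.norm_natCast] at h2
      have h3 : M₁ / σ ^ k < n * ‖(P 0).coeff k‖ := (div_lt_iff₀ hapos).mp hn
      push_cast at h2
      nlinarith
    have hH0eq : (fun t : ℂ => f (c + t • v) - (c + t • v)) = H 0 := by
      funext t
      simp [hHdef, hF0]
    rw [hH0eq] at hp
    have hpu : p = P 0 := hp.eq_formalMultilinearSeries (hp_ 0).hasFPowerSeriesAt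
    intro k
    rw [hpu]
    match k with
    | 0 => exact hc0 0
    | 1 => exact hc1 0
    | (k + 2) => exact main (k + 2) (by omega)
  -- conclusion on the ball
  intro z hz
  rcases eq_or_ne z c with rfl | hzc
  · simpa [hfix]
  · set v : E := z - c with hvdef
    have hvpos : 0 < ‖v‖ := by
      rw [hvdef, norm_pos_iff]
      exact sub_ne_zero.mpr hzc
    have hvR : ‖v‖ < R := by
      rw [hvdef, ← dist_eq_norm]
      exact mem_ball.mp hz
    set τ : ℝ := (1 + R / ‖v‖) / 2 with hτdef
    have hRv : 1 < R / ‖v‖ := (one_lt_div hvpos).mpr hvR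
    have hτ1 : 1 < τ := by rw [hτdef]; linarith
    have hτ0 : 0 < τ := by linarith
    have hτv : τ * ‖v‖ < R := by
      have h1 : τ * ‖v‖ = (‖v‖ + R) / 2 := by
        rw [hτdef]
        field_simp
      rw [h1]
      linarith
    have hdom : ∀ t : ℂ, ‖t‖ ≤ τ → c + t • v ∈ D := by
      intro t ht
      refine hRD ?_
      rw [mem_ball, dist_eq_norm, add_sub_cancel_left, norm_smul]
      calc ‖t‖ * ‖v‖ ≤ τ * ‖v‖ := by gcongr
        _ < R := hτv
    have hdiff : DifferentiableOn ℂ (fun t : ℂ => f (c + t • v) - (c + t • v))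
        (closedBall 0 τ) :=
      (cartan_aux_slice_diff hf hdom).sub
        ((((differentiable_fun_id (𝕜 := ℂ)).smul_const v).const_add c).differentiableOn)
    have hball := cartan_aux_series hτ0 hdiff
    have hcoeffs := key v _ hball.hasFPowerSeriesAt
    have hmem : (1 : ℂ) ∈ Metric.eball (0 : ℂ) (ENNReal.ofReal τ) :=
      cartan_aux_mem_eball (by simpa using hτ1)
    have hs := hball.hasSum hmem
    rw [zero_add] at hs
    have hzero : ∀ j : ℕ, (cauchyPowerSeries (fun t : ℂ => f (c + t • v) - (c + t • v)) 0 τ) j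
        (fun _ => (1 : ℂ)) = 0 := by
      intro j
      rw [FormalMultilinearSeries.apply_eq_pow_smul_coeff, hcoeffs j, smul_zero]
    simp only [hzero] at hs
    have hval := hs.unique hasSum_zero
    have h1 : c + (1 : ℂ) • v = z := by rw [hvdef]; simp
    rw [h1] at hval
    have : f z = z := sub_eq_zero.mp hval
    simpa using this

end Helpers

/-- H. Cartan's uniqueness theorem: an automorphism of a bounded domain fixing a point
with identity derivative there is the identity. -/
theorem cartan_uniqueness {d : ℕ} (D : Set (Fin d → ℂ))
    (hD_open : IsOpen D) (hD_conn : IsConnected D) (hD_bdd : Bornology.IsBounded D)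
    (f g : (Fin d → ℂ) → (Fin d → ℂ))
    (hf : DifferentiableOn ℂ f D) (hfD : Set.MapsTo f D D)
    (hg : DifferentiableOn ℂ g D) (hgD : Set.MapsTo g D D)
    (hgf : ∀ z ∈ D, g (f z) = z) (hfg : ∀ z ∈ D, f (g z) = z)
    (z₀ : Fin d → ℂ) (hz₀ : z₀ ∈ D) (hfix : f z₀ = z₀)
    (hderiv : fderiv ℂ f z₀ = ContinuousLinearMap.id ℂ (Fin d → ℂ)) :
    Set.EqOn f id D := by
  obtain ⟨M, hM⟩ := hD_bdd.exists_norm_le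
  set U : Set (Fin d → ℂ) := {z | ∃ ε > 0, Metric.ball z ε ⊆ D ∧ Set.EqOn f id (Metric.ball z ε)}
    with hUdef
  have hUopen : IsOpen U := by
    rw [Metric.isOpen_iff]
    rintro z ⟨ε, hε, hsub, heq⟩
    refine ⟨ε, hε, fun w hw => ?_⟩
    have hεw : 0 < ε - dist w z := by rw [Metric.mem_ball] at hw; linarith
    refine ⟨ε - dist w z, hεw, ?_, ?_⟩
    · exact subset_trans (Metric.ball_subset_ball' (by linarith)) hsub
    · exact heq.mono (Metric.ball_subset_ball' (by linarith))
  have hz₀U : z₀ ∈ U := by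
    obtain ⟨ε, hε, hsub⟩ := Metric.isOpen_iff.mp hD_open z₀ hz₀
    exact ⟨ε, hε, hsub, cartan_aux_local hD_open hf hfD hM hz₀ hfix hderiv hsub⟩
  have hclosure : closure U ∩ D ⊆ U := by
    rintro z ⟨hzcl, hzD⟩
    obtain ⟨ρ2, hρ2, hsub2⟩ := Metric.isOpen_iff.mp hD_open z hzD
    set ρ : ℝ := ρ2 / 2 with hρdef
    have hρpos : 0 < ρ := by positivity
    obtain ⟨w, hwU, hwz⟩ := Metric.mem_closure_iff.mp hzcl (ρ / 2) (by positivity)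
    obtain ⟨ε, hε, hsubw, heqw⟩ := hwU
    have hfw : f w = w := heqw (Metric.mem_ball_self hε)
    have hDfw : fderiv ℂ f w = ContinuousLinearMap.id ℂ (Fin d → ℂ) := by
      have hev : f =ᶠ[nhds w] id :=
        Filter.eventuallyEq_iff_exists_mem.mpr ⟨Metric.ball w ε, Metric.ball_mem_nhds w hε, heqw⟩
      rw [hev.fderiv_eq, fderiv_id]
    have hballw : Metric.ball w ρ ⊆ D := by
      refine subset_trans ?_ hsub2
      intro y hy
      rw [Metric.mem_ball] at hy ⊢
      have := dist_triangle y w z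
      rw [dist_comm z w] at hwz
      calc dist y z ≤ dist y w + dist w z := dist_triangle y w z
        _ < ρ + ρ / 2 := by gcongr
        _ ≤ ρ2 := by rw [hρdef]; linarith
    have heqz := cartan_aux_local hD_open hf hfD hM (hballw (Metric.mem_ball_self hρpos))
      hfw hDfw hballw
    refine ⟨ρ / 4, by positivity, ?_, ?_⟩
    · refine subset_trans ?_ hballw
      intro y hy
      rw [Metric.mem_ball] at hy ⊢
      calc dist y w ≤ dist y z + dist z w := dist_triangle y z w
        _ < ρ / 4 + ρ / 2 := by gcongr
        _ < ρ := by linarith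
    · refine heqz.mono ?_
      intro y hy
      rw [Metric.mem_ball] at hy ⊢
      calc dist y w ≤ dist y z + dist z w := dist_triangle y z w
        _ < ρ / 4 + ρ / 2 := by gcongr
        _ < ρ := by linarith
  have hDU : D ⊆ U :=
    hD_conn.isPreconnected.subset_of_closure_inter_subset hUopen ⟨z₀, hz₀, hz₀U⟩ hclosure
  intro z hz
  obtain ⟨ε, hε, _, heq⟩ := hDU hz
  exact heq (Metric.mem_ball_self hε)
end

section
/- If D is a bounded circular domain in ℂ^d containing 0 (circular means z ∈ D and |λ| = 1 imply λz ∈ D), and F is a biholomorphic automorphism of D with F(0) = 0, then F is the restriction to D of an invertible linear map on ℂ^d. -/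
set_option linter.unusedSectionVars false
set_option maxHeartbeats 1000000

open Set Metric Asymptotics Filter Function Topology

section Helpers

variable {E : Type*} [NormedAddCommGroup E] [NormedSpace ℂ E] [CompleteSpace E]


/-- little-o of `z^k` along punctured nhds implies tendsto 0 (uses continuity replacement). -/
lemma tendsto_zero_of_littleO_pow {f : ℂ → E} {k : ℕ} (hk : 1 ≤ k)
    (h : f =o[𝓝[≠] (0:ℂ)] fun z => z ^ k) : Tendsto f (𝓝[≠] (0:ℂ)) (𝓝 0) := by
  refine h.isBigO.trans_tendsto ?_
  have : Tendsto (fun z : ℂ => z ^ k) (𝓝 (0:ℂ)) (𝓝 ((0:ℂ) ^ k)) :=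
    (continuous_pow k).tendsto 0
  rw [zero_pow (by omega)] at this
  exact this.mono_left nhdsWithin_le_nhds

lemma value_eq_of_tendsto_punctured {f : ℂ → E} {a : E} (hc : ContinuousAt f 0)
    (ht : Tendsto f (𝓝[≠] (0:ℂ)) (𝓝 a)) : f 0 = a :=
  tendsto_nhds_unique (hc.tendsto.mono_left nhdsWithin_le_nhds) ht

lemma smul_pow_isLittleO {g : ℂ → E} {l : Filter ℂ} (hg : Tendsto g l (𝓝 0)) (k : ℕ) :
    (fun z : ℂ => z ^ k • g z) =o[l] fun z => z ^ k := by
  rw [isLittleO_iff]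
  intro c hc
  filter_upwards [NormedAddCommGroup.tendsto_nhds_zero.mp hg c hc] with z hz
  rw [norm_smul, mul_comm]
  exact mul_le_mul_of_nonneg_right hz.le (norm_nonneg _)

lemma dslope_diffOn {ρ : ℝ} (hρ : 0 < ρ) {ψ : ℂ → E}
    (h : DifferentiableOn ℂ ψ (ball 0 ρ)) :
    DifferentiableOn ℂ (dslope ψ 0) (ball 0 ρ) := by
  intro x hx
  rcases eq_or_ne x 0 with rfl | hne
  · obtain ⟨p, hp⟩ := h.analyticOnNhd isOpen_ball 0 (mem_ball_self hρ)
    exact hp.has_fpower_series_dslope_fslope.analyticAt.differentiableAt.differentiableWithinAt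
  · exact (differentiableWithinAt_dslope_of_ne hne).mpr (h x hx)


/-- factor `φ = z^k • ψ` out of a little-o. -/
lemma factor_littleO {ρ : ℝ} (hρ : 0 < ρ) (k : ℕ) :
    ∀ {φ : ℂ → E}, DifferentiableOn ℂ φ (ball 0 ρ) →
      (φ =o[𝓝[≠] (0:ℂ)] fun z => z ^ k) →
      ∃ ψ : ℂ → E, DifferentiableOn ℂ ψ (ball 0 ρ) ∧ ψ 0 = 0 ∧
        ∀ z ∈ ball (0:ℂ) ρ, φ z = z ^ k • ψ z := by
  induction k with
  | zero =>
    intro φ hφ ho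
    have ht : Tendsto φ (𝓝[≠] (0:ℂ)) (𝓝 0) :=
      (Asymptotics.isLittleO_one_iff ℂ).mp (by simpa using ho)
    have hc : ContinuousAt φ 0 :=
      (hφ.differentiableAt (isOpen_ball.mem_nhds (mem_ball_self hρ))).continuousAt
    exact ⟨φ, hφ, value_eq_of_tendsto_punctured hc ht, fun z _ => by simp⟩
  | succ k ih =>
    intro φ hφ ho
    -- φ =o (z^k)
    have hbig : (fun z : ℂ => z ^ (k+1)) =O[𝓝[≠] (0:ℂ)] fun z => z ^ k := by
      rw [isBigO_iff]
      refine ⟨1, ?_⟩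
      filter_upwards [nhdsWithin_le_nhds (Metric.ball_mem_nhds (0:ℂ) one_pos)] with z hz
      simp only [norm_pow, one_mul]
      rw [pow_succ]
      have h1 : ‖z‖ < 1 := by simpa [dist_eq_norm] using hz
      calc ‖z‖ ^ k * ‖z‖ ≤ ‖z‖ ^ k * 1 :=
            mul_le_mul_of_nonneg_left h1.le (by positivity)
        _ = ‖z‖ ^ k := mul_one _
    obtain ⟨ψ, hψd, hψ0, hψe⟩ := ih hφ (ho.trans_isBigO hbig)
    have hball : ∀ᶠ z in 𝓝[≠] (0:ℂ), z ∈ ball (0:ℂ) ρ ∧ z ≠ 0 := by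
      filter_upwards [nhdsWithin_le_nhds (Metric.ball_mem_nhds (0:ℂ) hρ),
        self_mem_nhdsWithin] with z h1 h2
      exact ⟨h1, h2⟩
    have hψo : ψ =o[𝓝[≠] (0:ℂ)] fun z => z ^ 1 := by
      rw [isLittleO_iff]
      intro c hc
      filter_upwards [ho.def hc, hball] with z hz hzb
      have hzpos : (0:ℝ) < ‖z‖ ^ k := pow_pos (norm_pos_iff.mpr hzb.2) k
      have hz' : ‖z‖ ^ k * ‖ψ z‖ ≤ ‖z‖ ^ k * (c * ‖z‖) := by
        calc ‖z‖ ^ k * ‖ψ z‖ = ‖φ z‖ := by rw [hψe z hzb.1, norm_smul, norm_pow]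
          _ ≤ c * ‖z ^ (k+1)‖ := hz
          _ = ‖z‖ ^ k * (c * ‖z‖) := by rw [norm_pow, pow_succ]; ring
      simpa [pow_one] using le_of_mul_le_mul_left hz' hzpos
    set ψ' := dslope ψ 0 with hψ'
    refine ⟨ψ', dslope_diffOn hρ hψd, ?_, ?_⟩
    · have hcont : ContinuousAt ψ' 0 :=
        ((dslope_diffOn hρ hψd 0 (mem_ball_self hρ)).differentiableAt
          (isOpen_ball.mem_nhds (mem_ball_self hρ))).continuousAt
      refine value_eq_of_tendsto_punctured hcont ?_
      rw [NormedAddCommGroup.tendsto_nhds_zero]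
      intro ε hε
      filter_upwards [hψo.def (half_pos hε), self_mem_nhdsWithin] with z hz hne
      have hne' : z ≠ (0:ℂ) := hne
      rw [hψ', dslope_of_ne _ hne', slope_def_module, sub_zero, hψ0, sub_zero, norm_smul,
        norm_inv]
      have hb : ‖ψ z‖ ≤ ε/2 * ‖z‖ := by simpa [pow_one] using hz
      calc ‖z‖⁻¹ * ‖ψ z‖ ≤ ‖z‖⁻¹ * (ε/2 * ‖z‖) :=
            mul_le_mul_of_nonneg_left hb (by positivity)
        _ = ε/2 * (‖z‖⁻¹ * ‖z‖) := by ring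
        _ = ε/2 := by rw [inv_mul_cancel₀ (norm_ne_zero_iff.mpr hne'), mul_one]
        _ < ε := by linarith
    · intro z hz
      rcases eq_or_ne z 0 with rfl | hne
      · simp [hψe 0 (mem_ball_self hρ), hψ0]
      · rw [hψe z hz, hψ', dslope_of_ne _ hne, slope_def_module, sub_zero, hψ0, sub_zero,
          smul_smul]
        congr 1
        field_simp [pow_succ]
        ring

end Helpers

lemma fderiv_close {d : ℕ} {D : Set (Fin d → ℂ)} (hD_open : IsOpen D)
    {f : (Fin d → ℂ) → (Fin d → ℂ)} (hf : DifferentiableOn ℂ f D)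
    {s : ℝ} (hs : 0 < s) (hsD : closedBall 0 (2*s) ⊆ D) {ε : ℝ} (hε : 0 < ε) :
    ∃ δ > 0, ∀ ξ ∈ ball (0 : Fin d → ℂ) δ, ‖fderiv ℂ f ξ - fderiv ℂ f 0‖ ≤ ε := by
  classical
  set ε' : ℝ := ε * s / (4 * ((d:ℝ)+1)) with hε'def
  have hε' : 0 < ε' := by positivity
  have hK : IsCompact (closedBall (0 : Fin d → ℂ) (2*s)) := isCompact_closedBall _ _
  have hfc : ContinuousOn f (closedBall 0 (2*s)) := hf.continuousOn.mono hsD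
  have huc := hK.uniformContinuousOn_of_continuous hfc
  rw [Metric.uniformContinuousOn_iff] at huc
  obtain ⟨δ₀, hδ₀pos, hδ₀⟩ := huc ε' hε'
  refine ⟨min δ₀ (s/2), lt_min hδ₀pos (half_pos hs), ?_⟩
  intro ξ hξ
  have hξn : ‖ξ‖ < min δ₀ (s/2) := by simpa [mem_ball, dist_eq_norm] using hξ
  have hξ1 : ‖ξ‖ < δ₀ := lt_of_lt_of_le hξn (min_le_left _ _)
  have hξ2 : ‖ξ‖ < s/2 := lt_of_lt_of_le hξn (min_le_right _ _)
  have hξK : ξ ∈ closedBall (0 : Fin d → ℂ) (2*s) := by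
    rw [mem_closedBall, dist_zero_right]; linarith
  have hξD : ξ ∈ D := hsD hξK
  have h0D : (0 : Fin d → ℂ) ∈ D := hsD (by simp [mem_closedBall]; positivity)
  set e : Fin d → (Fin d → ℂ) := fun i j => if i = j then 1 else 0 with he_def
  have he : ∀ i, ‖e i‖ ≤ 1 := by
    intro i
    rw [pi_norm_le_iff_of_nonneg zero_le_one]
    intro j
    simp only [he_def]
    split <;> simp
  have key : ∀ i, ‖(fderiv ℂ f ξ - fderiv ℂ f 0) (e i)‖ ≤ 4 * ε' / s := by
    intro i
    set h : ℂ → (Fin d → ℂ) := fun lam => f (ξ + lam • e i) - f (lam • e i) with hh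
    have hmem1 : ∀ lam : ℂ, ‖lam‖ ≤ s → (ξ + lam • e i) ∈ closedBall (0 : Fin d → ℂ) (2*s) := by
      intro lam hlam
      rw [mem_closedBall, dist_zero_right]
      calc ‖ξ + lam • e i‖ ≤ ‖ξ‖ + ‖lam • e i‖ := norm_add_le _ _
        _ ≤ s/2 + ‖lam‖ * ‖e i‖ := by rw [norm_smul]; linarith
        _ ≤ s/2 + s * 1 := by
            refine add_le_add_right (mul_le_mul hlam (he i) (norm_nonneg _) hs.le) _
        _ ≤ 2*s := by linarith
    have hmem2 : ∀ lam : ℂ, ‖lam‖ ≤ s → (lam • e i) ∈ closedBall (0 : Fin d → ℂ) (2*s) := by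
      intro lam hlam
      rw [mem_closedBall, dist_zero_right, norm_smul]
      calc ‖lam‖ * ‖e i‖ ≤ s * 1 := mul_le_mul hlam (he i) (norm_nonneg _) hs.le
        _ ≤ 2*s := by linarith
    have hdiff : DifferentiableOn ℂ h (ball 0 s) := by
      intro lam hlam
      have hlam' : ‖lam‖ ≤ s := by
        rw [mem_ball, dist_zero_right] at hlam; exact hlam.le
      have hc1 : DifferentiableAt ℂ (fun lam : ℂ => ξ + lam • e i) lam :=
        ((differentiable_id.smul_const (e i)).const_add ξ).differentiableAt
      have hc2 : DifferentiableAt ℂ (fun lam : ℂ => lam • e i) lam :=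
        (differentiable_id.smul_const (e i)).differentiableAt
      have hf1 : DifferentiableAt ℂ f (ξ + lam • e i) :=
        hf.differentiableAt (hD_open.mem_nhds (hsD (hmem1 lam hlam')))
      have hf2 : DifferentiableAt ℂ f (lam • e i) :=
        hf.differentiableAt (hD_open.mem_nhds (hsD (hmem2 lam hlam')))
      exact ((hf1.comp lam hc1).sub (hf2.comp lam hc2)).differentiableWithinAt
    have hdd : DifferentiableOn ℂ (dslope h 0) (ball 0 s) := dslope_diffOn hs hdiff
    have curve1 : HasDerivAt (fun lam : ℂ => ξ + lam • e i) (e i) 0 := by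
      simpa using ((hasDerivAt_id (0:ℂ)).smul_const (e i)).const_add ξ
    have curve2 : HasDerivAt (fun lam : ℂ => lam • e i) (e i) 0 := by
      simpa using (hasDerivAt_id (0:ℂ)).smul_const (e i)
    have hfd1 : HasDerivAt (fun lam : ℂ => f (ξ + lam • e i)) (fderiv ℂ f ξ (e i)) 0 := by
      have hF : HasFDerivAt f (fderiv ℂ f ξ) (ξ + (0:ℂ) • e i) := by
        rw [zero_smul, add_zero]
        exact (hf.differentiableAt (hD_open.mem_nhds hξD)).hasFDerivAt
      exact hF.comp_hasDerivAt 0 curve1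
    have hfd2 : HasDerivAt (fun lam : ℂ => f (lam • e i)) (fderiv ℂ f 0 (e i)) 0 := by
      have hF : HasFDerivAt f (fderiv ℂ f 0) ((0:ℂ) • e i) := by
        rw [zero_smul]
        exact (hf.differentiableAt (hD_open.mem_nhds h0D)).hasFDerivAt
      exact hF.comp_hasDerivAt 0 curve2
    have hder : HasDerivAt h (fderiv ℂ f ξ (e i) - fderiv ℂ f 0 (e i)) 0 := hfd1.sub hfd2
    have hbound : ∀ lam : ℂ, ‖lam‖ ≤ s → ‖h lam‖ ≤ ε' := by
      intro lam hlam
      have hd := hδ₀ _ (hmem1 lam hlam) _ (hmem2 lam hlam) (by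
        rw [dist_eq_norm]
        simpa using hξ1)
      rw [dist_eq_norm] at hd
      exact hd.le
    have hmm : ‖dslope h 0 0‖ ≤ 4 * ε' / s := by
      have hfr : ∀ z ∈ frontier (ball (0:ℂ) (s/2)), ‖dslope h 0 z‖ ≤ 4*ε'/s := by
        rw [frontier_ball (0:ℂ) (ne_of_gt (half_pos hs))]
        intro z hz
        have hzn : ‖z‖ = s/2 := by simpa [mem_sphere, dist_zero_right] using hz
        have hzne : z ≠ 0 := by
          intro h0; rw [h0, norm_zero] at hzn; linarith
        rw [dslope_of_ne _ hzne, slope_def_module, sub_zero, norm_smul, norm_inv, hzn]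
        have hb1 : ‖h z‖ ≤ ε' := hbound z (by rw [hzn]; linarith)
        have hb0 : ‖h 0‖ ≤ ε' := hbound 0 (by simp [hs.le])
        have : ‖h z - h 0‖ ≤ ε' + ε' := (norm_sub_le _ _).trans (add_le_add hb1 hb0)
        calc (s/2)⁻¹ * ‖h z - h 0‖ ≤ (s/2)⁻¹ * (ε' + ε') :=
              mul_le_mul_of_nonneg_left this (by positivity)
          _ = 4*ε'/s := by field_simp; ring
      have hdc : DiffContOnCl ℂ (dslope h 0) (ball 0 (s/2)) :=
        hdd.diffContOnCl_ball (closedBall_subset_ball (by linarith))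
      exact Complex.norm_le_of_forall_mem_frontier_norm_le isBounded_ball hdc hfr
        (subset_closure (mem_ball_self (half_pos hs)))
    rw [dslope_same, hder.deriv] at hmm
    simpa using hmm
  refine ContinuousLinearMap.opNorm_le_bound _ hε.le fun u => ?_
  have hu : u = ∑ i, u i • e i := pi_eq_sum_univ u
  have hds : (d:ℝ) * (4 * ε' / s) ≤ ε := by
    have h1 : 4 * ε' / s = ε / ((d:ℝ)+1) := by
      rw [hε'def]; field_simp
    rw [h1]
    have h2 : (d:ℝ) * (ε / ((d:ℝ)+1)) = ε * (d:ℝ) / ((d:ℝ)+1) := by ring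
    rw [h2, div_le_iff₀ (by positivity : (0:ℝ) < (d:ℝ)+1)]
    nlinarith [hε.le]
  calc ‖(fderiv ℂ f ξ - fderiv ℂ f 0) u‖
      = ‖∑ i, u i • (fderiv ℂ f ξ - fderiv ℂ f 0) (e i)‖ := by
        conv_lhs => rw [hu]
        rw [map_sum]
        congr 1
        refine Finset.sum_congr rfl fun i _ => ?_
        rw [map_smul]
    _ ≤ ∑ i, ‖u i • (fderiv ℂ f ξ - fderiv ℂ f 0) (e i)‖ := norm_sum_le _ _
    _ ≤ ∑ _i : Fin d, ‖u‖ * (4 * ε' / s) := by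
        refine Finset.sum_le_sum fun i _ => ?_
        rw [norm_smul]
        exact mul_le_mul (norm_le_pi_norm u i) (key i) (norm_nonneg _) (norm_nonneg _)
    _ = (d:ℝ) * (4 * ε' / s) * ‖u‖ := by
        rw [Finset.sum_const, Finset.card_univ, Fintype.card_fin, nsmul_eq_mul]; ring
    _ ≤ ε * ‖u‖ := mul_le_mul_of_nonneg_right hds (norm_nonneg _)

lemma vanish_propagate {d : ℕ} {D : Set (Fin d → ℂ)} (hD_open : IsOpen D)
    (hD_conn : IsPreconnected D) {f : (Fin d → ℂ) → (Fin d → ℂ)}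
    (hf : DifferentiableOn ℂ f D) {x₀ : Fin d → ℂ} {ε : ℝ} (hε : 0 < ε)
    (hball : ball x₀ ε ⊆ D) (hvan : ∀ y ∈ ball x₀ ε, f y = 0) :
    ∀ x ∈ D, f x = 0 := by
  set u := {x : Fin d → ℂ | ∀ᶠ y in 𝓝 x, f y = 0} with hu
  have hu_open : IsOpen u := isOpen_setOf_eventually_nhds
  have hx₀u : x₀ ∈ u := eventually_of_mem (ball_mem_nhds x₀ hε) hvan
  have hkey : closure u ∩ D ⊆ u := by
    rintro x ⟨hxc, hxD⟩
    obtain ⟨ε', hε', hball'⟩ := Metric.isOpen_iff.mp hD_open x hxD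
    have hne : (ball x (ε'/4) ∩ u).Nonempty := by
      rw [_root_.mem_closure_iff] at hxc
      exact hxc _ isOpen_ball (mem_ball_self (by positivity))
    obtain ⟨w, hwb, hwu⟩ := hne
    have hwx : ‖w - x‖ < ε'/4 := by rwa [mem_ball, dist_eq_norm] at hwb
    have hz : ∀ y ∈ ball x (ε'/4), f y = 0 := by
      intro y hy
      have hyx : ‖y - x‖ < ε'/4 := by rwa [mem_ball, dist_eq_norm] at hy
      rcases eq_or_ne y w with rfl | hyw
      · exact hwu.self_of_nhds
      · set v := y - w with hv
        have hvne : v ≠ 0 := sub_ne_zero.mpr hyw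
        have hvpos : 0 < ‖v‖ := norm_pos_iff.mpr hvne
        have hvn : ‖v‖ < ε'/2 := by
          calc ‖y - w‖ ≤ ‖y - x‖ + ‖x - w‖ := norm_sub_le_norm_sub_add_norm_sub _ _ _
            _ = ‖y - x‖ + ‖w - x‖ := by rw [norm_sub_rev x w]
            _ < ε'/2 := by linarith
        set ρ : ℝ := (ε' - ‖w - x‖)/‖v‖ with hρdef
        have hρ : 1 < ρ := by
          rw [hρdef, lt_div_iff₀ hvpos, one_mul]
          linarith
        have hg : DifferentiableOn ℂ (fun lam : ℂ => f (w + lam • v)) (ball 0 ρ) := by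
          intro lam hlam
          have hlam' : ‖lam‖ < ρ := by rwa [mem_ball, dist_zero_right] at hlam
          have hpD : (w + lam • v) ∈ D := by
            apply hball'
            rw [mem_ball, dist_eq_norm]
            have : ‖w + lam • v - x‖ ≤ ‖w - x‖ + ‖lam‖ * ‖v‖ := by
              calc ‖w + lam • v - x‖ = ‖(w - x) + lam • v‖ := by ring_nf
                _ ≤ ‖w - x‖ + ‖lam • v‖ := norm_add_le _ _
                _ = ‖w - x‖ + ‖lam‖ * ‖v‖ := by rw [norm_smul]
            have h2 : ‖lam‖ * ‖v‖ < ρ * ‖v‖ := by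
              exact mul_lt_mul_of_pos_right hlam' hvpos
            rw [hρdef, div_mul_cancel₀ _ (ne_of_gt hvpos)] at h2
            linarith
          have hcurve : DifferentiableAt ℂ (fun lam : ℂ => w + lam • v) lam :=
            ((differentiable_id.smul_const v).const_add w).differentiableAt
          exact ((hf.differentiableAt (hD_open.mem_nhds hpD)).comp lam
            hcurve).differentiableWithinAt
        have han : AnalyticOnNhd ℂ (fun lam : ℂ => f (w + lam • v)) (ball 0 ρ) :=
          hg.analyticOnNhd isOpen_ball
        have htend : Tendsto (fun lam : ℂ => w + lam • v) (𝓝 0) (𝓝 w) := by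
          have : Continuous (fun lam : ℂ => w + lam • v) :=
            continuous_const.add (continuous_id.smul continuous_const)
          simpa using this.tendsto 0
        have hev : (fun lam : ℂ => f (w + lam • v)) =ᶠ[𝓝 (0:ℂ)] 0 := by
          filter_upwards [htend.eventually hwu] with lam hlam
          exact hlam
        have hEq := han.eqOn_zero_of_preconnected_of_eventuallyEq_zero
          (convex_ball (0:ℂ) ρ).isPreconnected (mem_ball_self (by linarith)) hev
        have h1m : (1:ℂ) ∈ ball (0:ℂ) ρ := by
          rw [mem_ball, dist_zero_right, norm_one]; exact hρ
        have := hEq h1m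
        simpa [hv] using this
    exact eventually_of_mem (ball_mem_nhds x (by positivity)) hz
  have hsub : D ⊆ u :=
    hD_conn.subset_of_closure_inter_subset hu_open
      ⟨x₀, hball (mem_ball_self hε), hx₀u⟩ hkey
  exact fun x hx => (hsub hx).self_of_nhds

lemma freq_unimodular : ∃ᶠ z in 𝓝[≠] (1:ℂ), ‖z‖ = 1 := by
  have hne1 : ∀ j : ℕ, Complex.exp ((1/((j:ℝ)+1) : ℝ) * Complex.I) ≠ 1 := by
    intro j h
    rw [Complex.exp_eq_one_iff] at h
    obtain ⟨n, hn⟩ := h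
    have hI : (((1/((j:ℝ)+1) : ℝ)) : ℂ) = (n : ℂ) * (2 * Real.pi) := by
      have h2 : (((1/((j:ℝ)+1) : ℝ)) : ℂ) * Complex.I
          = ((n : ℂ) * (2 * Real.pi)) * Complex.I := by rw [hn]; ring
      exact mul_right_cancel₀ Complex.I_ne_zero h2
    have hreal : (1/((j:ℝ)+1) : ℝ) = (n : ℝ) * (2 * Real.pi) := by exact_mod_cast hI
    have hp1 : (0:ℝ) < 1/((j:ℝ)+1) := by positivity
    have hp2 : (1/((j:ℝ)+1) : ℝ) ≤ 1 := by
      rw [div_le_one (by positivity)]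
      simp
    have hpi : (3:ℝ) < 2 * Real.pi := by
      have := Real.pi_gt_three
      linarith
    rcases le_or_gt (n:ℝ) 0 with hn0 | hn0
    · have hmul : (n:ℝ) * (2 * Real.pi) ≤ 0 :=
        mul_nonpos_of_nonpos_of_nonneg hn0 (by linarith)
      linarith
    · have h1n : (1:ℝ) ≤ (n:ℝ) := by
        have h3 : (0:ℤ) < n := by exact_mod_cast hn0
        exact_mod_cast h3
      nlinarith
  have htends : Tendsto (fun j : ℕ => Complex.exp ((1/((j:ℝ)+1) : ℝ) * Complex.I))
      atTop (𝓝[≠] (1:ℂ)) := by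
    rw [tendsto_nhdsWithin_iff]
    refine ⟨?_, Eventually.of_forall fun j => hne1 j⟩
    have h1 : Tendsto (fun j : ℕ => (1/((j:ℝ)+1) : ℝ)) atTop (𝓝 0) :=
      tendsto_one_div_add_atTop_nhds_zero_nat
    have h3 : Tendsto (fun j : ℕ => (((1/((j:ℝ)+1) : ℝ)) : ℂ)) atTop (𝓝 0) := by
      have h4 := (Complex.continuous_ofReal.tendsto 0).comp h1
      simpa [Function.comp_def] using h4
    have h2 : Tendsto (fun j : ℕ => (((1/((j:ℝ)+1) : ℝ)) : ℂ) * Complex.I) atTop (𝓝 0) := by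
      simpa using h3.mul_const Complex.I
    have h5 := (Complex.continuous_exp.tendsto 0).comp h2
    simpa [Function.comp_def] using h5
  refine htends.frequently (Frequently.of_forall fun j => ?_)
  rw [Complex.norm_exp_ofReal_mul_I]

lemma cartan_uniqueness_s1 {d : ℕ} {D : Set (Fin d → ℂ)} (hD_open : IsOpen D)
    (hD_conn : IsPreconnected D) (hD_bdd : Bornology.IsBounded D)
    (h0 : (0 : Fin d → ℂ) ∈ D) {H : (Fin d → ℂ) → (Fin d → ℂ)}
    (hH : DifferentiableOn ℂ H D) (hHD : Set.MapsTo H D D) (hH0 : H 0 = 0)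
    (hHd : fderiv ℂ H 0 = ContinuousLinearMap.id ℂ (Fin d → ℂ)) :
    Set.EqOn H id D := by
  obtain ⟨R, hRpos, hRD⟩ := hD_bdd.subset_closedBall_lt 0 0
  obtain ⟨r₀, hr₀, hr₀D⟩ := Metric.isOpen_iff.mp hD_open 0 h0
  -- the ε-δ uniform differentiability statement
  have hB' : ∀ ε : ℝ, 0 < ε → ∃ δ, 0 < δ ∧ ∀ w u : Fin d → ℂ, w ∈ ball 0 δ →
      w + u ∈ ball 0 δ → ‖H (w + u) - H w - u‖ ≤ ε * ‖u‖ := by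
    intro ε hε
    have hcb : closedBall (0 : Fin d → ℂ) (2*(r₀/4)) ⊆ D := by
      refine subset_trans ?_ hr₀D
      intro y hy
      rw [mem_closedBall, dist_zero_right] at hy
      rw [mem_ball, dist_zero_right]
      linarith
    obtain ⟨δ₁, hδ₁, hd₁⟩ := fderiv_close hD_open hH (by positivity : (0:ℝ) < r₀/4) hcb hε
    refine ⟨min δ₁ (r₀/2), lt_min hδ₁ (by positivity), ?_⟩
    intro w u hw hwu
    set B := ball (0 : Fin d → ℂ) (min δ₁ (r₀/2)) with hB
    have hBD : B ⊆ D := by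
      refine subset_trans ?_ hr₀D
      intro y hy
      rw [mem_ball, dist_zero_right] at hy ⊢
      have := lt_of_lt_of_le hy (min_le_right _ _)
      linarith
    have hdiff : DifferentiableOn ℂ (fun x => H x - x) B :=
      (hH.mono hBD).sub differentiableOn_id
    have hbound : ∀ x ∈ B, ‖fderivWithin ℂ (fun x => H x - x) B x‖ ≤ ε := by
      intro x hx
      rw [fderivWithin_of_isOpen isOpen_ball hx]
      have hx' : DifferentiableAt ℂ H x := hH.differentiableAt (hD_open.mem_nhds (hBD hx))
      rw [fderiv_fun_sub hx' differentiableAt_fun_id]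
      have hxball : x ∈ ball (0 : Fin d → ℂ) δ₁ := by
        rw [mem_ball, dist_zero_right]
        rw [hB, mem_ball, dist_zero_right] at hx
        exact lt_of_lt_of_le hx (min_le_left _ _)
      have := hd₁ x hxball
      rw [hHd] at this
      simpa [fderiv_id'] using this
    have := (convex_ball _ _).norm_image_sub_le_of_norm_fderivWithin_le hdiff hbound hwu hw
    calc ‖H (w + u) - H w - u‖ = ‖(H w - w) - (H (w+u) - (w+u))‖ := by
          rw [← norm_neg]; congr 1; abel
      _ ≤ ε * ‖w - (w+u)‖ := this
      _ = ε * ‖u‖ := by rw [← norm_neg]; congr 2; abel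
  -- iterates
  have hHnD : ∀ n, Set.MapsTo (H^[n]) D D := fun n => hHD.iterate n
  have hHnDiff : ∀ n, DifferentiableOn ℂ (H^[n]) D := by
    intro n
    induction n with
    | zero => simpa using differentiableOn_id
    | succ n ih =>
      rw [Function.iterate_succ']
      exact hH.comp ih (hHnD n)
  have hHn0 : ∀ n, H^[n] 0 = 0 := by
    intro n
    induction n with
    | zero => rfl
    | succ n ih => rw [Function.iterate_succ_apply', ih, hH0]
  -- slices
  have hcurveB : ∀ z : Fin d → ℂ, z ≠ 0 → ‖z‖ < r₀ →
      ∀ lam : ℂ, lam ∈ ball (0:ℂ) (r₀/‖z‖) → lam • z ∈ ball (0 : Fin d → ℂ) r₀ := by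
    intro z hzne hzr lam hlam
    rw [mem_ball, dist_zero_right] at hlam ⊢
    rw [norm_smul]
    have hzpos : 0 < ‖z‖ := norm_pos_iff.mpr hzne
    calc ‖lam‖ * ‖z‖ < (r₀/‖z‖) * ‖z‖ := mul_lt_mul_of_pos_right hlam hzpos
      _ = r₀ := div_mul_cancel₀ _ (ne_of_gt hzpos)
  have hsliceDiff : ∀ (z : Fin d → ℂ), z ≠ 0 → ‖z‖ < r₀ → ∀ n,
      DifferentiableOn ℂ (fun lam : ℂ => H^[n] (lam • z)) (ball 0 (r₀/‖z‖)) := by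
    intro z hzne hzr n lam hlam
    have h1 : DifferentiableAt ℂ (fun lam : ℂ => lam • z) lam :=
      (differentiable_id.smul_const z).differentiableAt
    have h2 : DifferentiableAt ℂ (H^[n]) (lam • z) :=
      (hHnDiff n).differentiableAt (hD_open.mem_nhds (hr₀D (hcurveB z hzne hzr lam hlam)))
    exact (h2.comp lam h1).differentiableWithinAt
  -- main induction
  have QQ : ∀ m : ℕ, 1 ≤ m → ∀ z : Fin d → ℂ, z ∈ ball 0 r₀ →
      (fun lam : ℂ => H (lam • z) - lam • z) =o[𝓝[≠] (0:ℂ)] fun lam => lam ^ m := by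
    intro m hm
    induction m, hm using Nat.le_induction with
    | base =>
      intro z hz
      have hzD : z ∈ D := hr₀D hz
      have curve : HasDerivAt (fun lam : ℂ => lam • z) z 0 := by
        simpa using (hasDerivAt_id (0:ℂ)).smul_const z
      have hF : HasFDerivAt H (fderiv ℂ H 0) ((0:ℂ) • z) := by
        rw [zero_smul]
        exact (hH.differentiableAt (hD_open.mem_nhds h0)).hasFDerivAt
      have hder : HasDerivAt (fun lam : ℂ => H (lam • z)) z 0 := by
        have := hF.comp_hasDerivAt 0 curve
        rwa [hHd, ContinuousLinearMap.id_apply] at this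
      have h1 := hasDerivAt_iff_isLittleO.mp hder
      simp only [zero_smul, hH0, sub_zero] at h1
      have h2 : (fun lam : ℂ => H (lam • z) - lam • z) =o[𝓝 (0:ℂ)] fun lam => lam := by
        simpa using h1
      refine (h2.mono nhdsWithin_le_nhds).congr' EventuallyEq.rfl ?_
      exact Eventually.of_forall fun lam => (pow_one lam).symm
    | succ m hm ih =>
      intro z hz
      rcases eq_or_ne z 0 with rfl | hzne
      · refine ((isLittleO_zero (fun lam : ℂ => lam ^ (m+1)) (𝓝[≠] (0:ℂ))).congr'
          (Eventually.of_forall fun lam => ?_) EventuallyEq.rfl)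
        simp [hH0]
      · have hzr : ‖z‖ < r₀ := by rwa [mem_ball, dist_zero_right] at hz
        have hzpos : 0 < ‖z‖ := norm_pos_iff.mpr hzne
        set ρ : ℝ := r₀/‖z‖ with hρdef
        have hρ1 : 1 < ρ := by
          rw [hρdef, lt_div_iff₀ hzpos, one_mul]; exact hzr
        have hρpos : 0 < ρ := lt_trans one_pos hρ1
        have hφd : DifferentiableOn ℂ (fun lam : ℂ => H (lam • z) - lam • z) (ball 0 ρ) := by
          have h1 := hsliceDiff z hzne hzr 1
          simp only [Function.iterate_one] at h1
          exact h1.sub (differentiable_id.smul_const z).differentiableOn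
        obtain ⟨ψ, hψd, hψ0, hψeq⟩ := factor_littleO hρpos m hφd (ih z hz)
        set χ := dslope ψ 0 with hχdef
        have hχd : DifferentiableOn ℂ χ (ball 0 ρ) := dslope_diffOn hρpos hψd
        set c := χ 0 with hcdef
        have hφeq : ∀ lam ∈ ball (0:ℂ) ρ, H (lam • z) - lam • z = lam^(m+1) • χ lam := by
          intro lam hlam
          rcases eq_or_ne lam 0 with rfl | hlne
          · have := hψeq 0 (mem_ball_self hρpos)
            simp only [zero_smul, hH0] at this ⊢
            rw [sub_zero] at this ⊢
            rw [this, zero_pow (by omega), zero_smul]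
            · rw [zero_pow (by omega), zero_smul]
          · rw [hψeq lam hlam, hχdef, dslope_of_ne _ hlne, slope_def_module, sub_zero, hψ0,
              sub_zero, smul_smul]
            congr 1
            field_simp [pow_succ]
            ring
        have hχcont : ContinuousAt χ 0 :=
          ((hχd 0 (mem_ball_self hρpos)).differentiableAt
            (isOpen_ball.mem_nhds (mem_ball_self hρpos))).continuousAt
        have hballev : ∀ᶠ lam in 𝓝[≠] (0:ℂ), lam ∈ ball (0:ℂ) ρ :=
          nhdsWithin_le_nhds (Metric.ball_mem_nhds (0:ℂ) hρpos)
        have ho1 : (fun lam : ℂ => (H (lam • z) - lam • z) - lam^(m+1) • c)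
            =o[𝓝[≠] (0:ℂ)] fun lam => lam^(m+1) := by
          have htc : Tendsto (fun lam : ℂ => χ lam - c) (𝓝[≠] (0:ℂ)) (𝓝 0) := by
            have := (hχcont.tendsto.mono_left (nhdsWithin_le_nhds : 𝓝[≠] (0:ℂ) ≤ 𝓝 0)).sub_const c
            simpa [hcdef] using this
          refine (smul_pow_isLittleO htc (m+1)).congr' ?_ EventuallyEq.rfl
          filter_upwards [hballev] with lam hlam
          rw [hφeq lam hlam, smul_sub]
        -- the iterate estimate
        have hP : ∀ n : ℕ, (fun lam : ℂ => H^[n] (lam • z) - lam • z - ((n:ℂ) * lam^(m+1)) • c)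
            =o[𝓝[≠] (0:ℂ)] fun lam => lam^(m+1) := by
          intro n
          induction n with
          | zero =>
            refine ((isLittleO_zero (fun lam : ℂ => lam ^ (m+1)) (𝓝[≠] (0:ℂ))).congr'
              (Eventually.of_forall fun lam => ?_) EventuallyEq.rfl)
            simp
          | succ n ihn =>
            have hterm : (fun lam : ℂ => ((n:ℂ) * lam^(m+1)) • c) =O[𝓝[≠] (0:ℂ)]
                fun lam => lam^(m+1) := by
              rw [isBigO_iff]
              refine ⟨(n:ℝ) * ‖c‖, Eventually.of_forall fun lam => ?_⟩
              rw [norm_smul, norm_mul, Complex.norm_natCast]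
              exact le_of_eq (by ring)
            have hubig : (fun lam : ℂ => H^[n] (lam • z) - lam • z) =O[𝓝[≠] (0:ℂ)]
                fun lam => lam^(m+1) := by
              have := ihn.isBigO.add hterm
              refine this.congr' (Eventually.of_forall fun lam => ?_) EventuallyEq.rfl
              abel
            obtain ⟨C, hC⟩ := isBigO_iff.mp hubig
            set C' : ℝ := max C 0 + 1 with hC'def
            have hC'pos : 0 < C' := by positivity
            have hC' : ∀ᶠ lam in 𝓝[≠] (0:ℂ), ‖H^[n] (lam • z) - lam • z‖ ≤ C' * ‖lam^(m+1)‖ := by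
              filter_upwards [hC] with lam h1
              refine h1.trans (mul_le_mul_of_nonneg_right ?_ (norm_nonneg _))
              rw [hC'def]
              have := le_max_left C 0
              linarith
            have hpow0 : Tendsto (fun lam : ℂ => lam^(m+1)) (𝓝[≠] (0:ℂ)) (𝓝 0) := by
              have h2 := (continuous_pow (m+1)).tendsto (0:ℂ)
              rw [zero_pow (by omega : m + 1 ≠ 0)] at h2
              exact h2.mono_left nhdsWithin_le_nhds
            have hutend : Tendsto (fun lam : ℂ => H^[n] (lam • z) - lam • z)
                (𝓝[≠] (0:ℂ)) (𝓝 0) := hubig.trans_tendsto hpow0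
            have hztend : Tendsto (fun lam : ℂ => lam • z) (𝓝[≠] (0:ℂ)) (𝓝 0) := by
              have hcont : Continuous fun lam : ℂ => lam • z :=
                continuous_id.smul continuous_const
              have h2 := hcont.tendsto 0
              rw [zero_smul] at h2
              exact h2.mono_left nhdsWithin_le_nhds
            have hatend : Tendsto (fun lam : ℂ => H^[n] (lam • z)) (𝓝[≠] (0:ℂ)) (𝓝 0) := by
              have h2 := hutend.add hztend
              rw [add_zero] at h2
              exact h2.congr fun lam => by abel
            have he : (fun lam : ℂ => H (H^[n] (lam • z)) - H (lam • z) -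
                (H^[n] (lam • z) - lam • z)) =o[𝓝[≠] (0:ℂ)] fun lam => lam^(m+1) := by
              rw [isLittleO_iff]
              intro ε hε
              obtain ⟨δ, hδ, hδp⟩ := hB' (ε/C') (by positivity)
              have ev1 : ∀ᶠ lam in 𝓝[≠] (0:ℂ), lam • z ∈ ball (0:Fin d → ℂ) δ := by
                filter_upwards [Metric.tendsto_nhds.mp hztend δ hδ] with lam h
                rwa [mem_ball]
              have ev2 : ∀ᶠ lam in 𝓝[≠] (0:ℂ), H^[n] (lam • z) ∈ ball (0:Fin d → ℂ) δ := by
                filter_upwards [Metric.tendsto_nhds.mp hatend δ hδ] with lam h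
                rwa [mem_ball]
              filter_upwards [ev1, ev2, hC'] with lam h1 h2 h3
              have happ := hδp (lam • z) (H^[n] (lam • z) - lam • z) h1
                (by rwa [add_sub_cancel])
              rw [add_sub_cancel] at happ
              calc ‖H (H^[n] (lam • z)) - H (lam • z) - (H^[n] (lam • z) - lam • z)‖
                  ≤ (ε/C') * ‖H^[n] (lam • z) - lam • z‖ := happ
                _ ≤ (ε/C') * (C' * ‖lam^(m+1)‖) :=
                    mul_le_mul_of_nonneg_left h3 (by positivity)
                _ = ε * ‖lam^(m+1)‖ := by field_simp
            have hsum := (he.add ho1).add ihn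
            refine hsum.congr' (Eventually.of_forall fun lam => ?_) EventuallyEq.rfl
            simp only [Function.iterate_succ_apply']
            push_cast
            rw [add_mul, one_mul, add_smul]
            abel
        have hc0 : c = 0 := by
          by_contra hcne
          have hcpos : 0 < ‖c‖ := norm_pos_iff.mpr hcne
          set σ : ℝ := ρ/2 with hσdef
          have hσpos : 0 < σ := by positivity
          have hσρ : σ < ρ := by rw [hσdef]; linarith
          have hbd : ∀ n : ℕ, (n:ℝ) * ‖c‖ ≤ (R + r₀) / σ^(m+1) := by
            intro n
            have hGd : DifferentiableOn ℂ
                (fun lam : ℂ => H^[n] (lam • z) - lam • z - ((n:ℂ) * lam^(m+1)) • c)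
                (ball 0 ρ) := by
              refine ((hsliceDiff z hzne hzr n).sub
                (differentiable_id.smul_const z).differentiableOn).sub ?_
              exact (((differentiable_pow (m+1)).const_mul _).smul_const c).differentiableOn
            obtain ⟨τ, hτd, hτ0, hτeq⟩ := factor_littleO hρpos (m+1) hGd (hP n)
            set ψn : ℂ → (Fin d → ℂ) := fun lam => τ lam + (n:ℂ) • c with hψndef
            have hψnd : DifferentiableOn ℂ ψn (ball 0 ρ) := hτd.add_const _
            have hψneq : ∀ lam ∈ ball (0:ℂ) ρ,
                H^[n] (lam • z) - lam • z = lam^(m+1) • ψn lam := by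
              intro lam hlam
              have h1 := hτeq lam hlam
              have h2 : H^[n] (lam • z) - lam • z
                  = lam^(m+1) • τ lam + ((n:ℂ) * lam^(m+1)) • c := by
                rw [← h1]; abel
              rw [h2, hψndef, smul_add, smul_smul]
              congr 2
              ring
            have hfr : ∀ w ∈ frontier (ball (0:ℂ) σ), ‖ψn w‖ ≤ (R + r₀)/σ^(m+1) := by
              rw [frontier_ball (0:ℂ) (ne_of_gt hσpos)]
              intro w hw
              have hwn : ‖w‖ = σ := by simpa [mem_sphere_iff_norm] using hw
              have hwb : w ∈ ball (0:ℂ) ρ := by rw [mem_ball, dist_zero_right, hwn]; exact hσρ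
              have heq := hψneq w hwb
              have hwzD : w • z ∈ D := hr₀D (hcurveB z hzne hzr w hwb)
              have hHb : ‖H^[n] (w • z)‖ ≤ R := by
                have h3 := hRD (hHnD n hwzD)
                rwa [mem_closedBall, dist_zero_right] at h3
              have hwzb : ‖w • z‖ ≤ r₀ := by
                have h3 := hcurveB z hzne hzr w hwb
                rw [mem_ball, dist_zero_right] at h3
                exact h3.le
              have hnum : ‖H^[n] (w • z) - w • z‖ ≤ R + r₀ :=
                (norm_sub_le _ _).trans (add_le_add hHb hwzb)
              have hml : σ^(m+1) * ‖ψn w‖ ≤ R + r₀ := by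
                rw [show σ^(m+1) * ‖ψn w‖ = ‖H^[n] (w • z) - w • z‖ by
                  rw [heq, norm_smul, norm_pow, hwn]]
                exact hnum
              rw [le_div_iff₀ (pow_pos hσpos _)]
              calc ‖ψn w‖ * σ^(m+1) = σ^(m+1) * ‖ψn w‖ := by ring
                _ ≤ R + r₀ := hml
            have hdc : DiffContOnCl ℂ ψn (ball 0 σ) :=
              hψnd.diffContOnCl_ball (closedBall_subset_ball hσρ)
            have hmm := Complex.norm_le_of_forall_mem_frontier_norm_le isBounded_ball hdc hfr
              (subset_closure (mem_ball_self hσpos))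
            have hψn0 : ψn 0 = (n:ℂ) • c := by rw [hψndef]; simp [hτ0]
            rw [hψn0, norm_smul, Complex.norm_natCast] at hmm
            exact hmm
          obtain ⟨n, hn⟩ := exists_nat_gt ((R + r₀)/σ^(m+1) / ‖c‖)
          have h1 := hbd n
          rw [div_lt_iff₀ hcpos] at hn
          linarith
        simpa [hc0] using ho1
  -- H = id on the small ball
  have hball_eq : ∀ x ∈ ball (0 : Fin d → ℂ) r₀, H x = x := by
    intro x hx
    rcases eq_or_ne x 0 with rfl | hxne
    · exact hH0
    · have hxr : ‖x‖ < r₀ := by rwa [mem_ball, dist_zero_right] at hx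
      have hxpos : 0 < ‖x‖ := norm_pos_iff.mpr hxne
      set ρ : ℝ := r₀/‖x‖ with hρdef
      have hρ1 : 1 < ρ := by rw [hρdef, lt_div_iff₀ hxpos, one_mul]; exact hxr
      have hρpos : 0 < ρ := lt_trans one_pos hρ1
      set σ : ℝ := ρ/2 with hσdef
      have hσpos : 0 < σ := by positivity
      have hσρ : σ < ρ := by rw [hσdef]; linarith
      have hφd : DifferentiableOn ℂ (fun lam : ℂ => H (lam • x) - lam • x) (ball 0 ρ) := by
        have h1 := hsliceDiff x hxne hxr 1
        simp only [Function.iterate_one] at h1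
        exact h1.sub (differentiable_id.smul_const x).differentiableOn
      have hvanish : ∀ lam ∈ ball (0:ℂ) σ, H (lam • x) - lam • x = 0 := by
        intro lam hlam
        have hlamn : ‖lam‖ < σ := by rwa [mem_ball, dist_zero_right] at hlam
        have hkey : ∀ m : ℕ, 1 ≤ m → ‖H (lam • x) - lam • x‖ ≤ (R + r₀) * (‖lam‖/σ)^m := by
          intro m hm
          obtain ⟨ψ, hψd, hψ0, hψeq⟩ := factor_littleO hρpos m hφd (QQ m hm x hx)
          have hfr : ∀ w ∈ frontier (ball (0:ℂ) σ), ‖ψ w‖ ≤ (R + r₀)/σ^m := by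
            rw [frontier_ball (0:ℂ) (ne_of_gt hσpos)]
            intro w hw
            have hwn : ‖w‖ = σ := by simpa [mem_sphere_iff_norm] using hw
            have hwb : w ∈ ball (0:ℂ) ρ := by rw [mem_ball, dist_zero_right, hwn]; exact hσρ
            have heq := hψeq w hwb
            have hwzD : w • x ∈ D := hr₀D (hcurveB x hxne hxr w hwb)
            have hHb : ‖H (w • x)‖ ≤ R := by
              have h3 := hRD (hHD hwzD)
              rwa [mem_closedBall, dist_zero_right] at h3
            have hwzb : ‖w • x‖ ≤ r₀ := by
              have h3 := hcurveB x hxne hxr w hwb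
              rw [mem_ball, dist_zero_right] at h3
              exact h3.le
            have hnum : ‖H (w • x) - w • x‖ ≤ R + r₀ :=
              (norm_sub_le _ _).trans (add_le_add hHb hwzb)
            have hml : σ^m * ‖ψ w‖ ≤ R + r₀ := by
              rw [show σ^m * ‖ψ w‖ = ‖H (w • x) - w • x‖ by
                rw [heq, norm_smul, norm_pow, hwn]]
              exact hnum
            rw [le_div_iff₀ (pow_pos hσpos _)]
            calc ‖ψ w‖ * σ^m = σ^m * ‖ψ w‖ := by ring
              _ ≤ R + r₀ := hml
          have hdc : DiffContOnCl ℂ ψ (ball 0 σ) :=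
            hψd.diffContOnCl_ball (closedBall_subset_ball hσρ)
          have hmm := Complex.norm_le_of_forall_mem_frontier_norm_le isBounded_ball hdc hfr
            (subset_closure hlam)
          have hlamρ : lam ∈ ball (0:ℂ) ρ := by
            rw [mem_ball, dist_zero_right]; exact lt_trans hlamn hσρ
          rw [hψeq lam hlamρ, norm_smul, norm_pow]
          calc ‖lam‖^m * ‖ψ lam‖ ≤ ‖lam‖^m * ((R + r₀)/σ^m) :=
                mul_le_mul_of_nonneg_left hmm (by positivity)
            _ = (R + r₀) * (‖lam‖/σ)^m := by rw [mul_div_left_comm, ← div_pow]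
        have htendm : Tendsto (fun m : ℕ => (R + r₀) * (‖lam‖/σ)^m) atTop (𝓝 0) := by
          have h1 : |‖lam‖/σ| < 1 := by
            rw [abs_of_nonneg (by positivity), div_lt_one hσpos]
            exact hlamn
          have h2 := tendsto_pow_atTop_nhds_zero_of_abs_lt_one h1
          simpa using h2.const_mul (R + r₀)
        have hle : ‖H (lam • x) - lam • x‖ ≤ 0 := by
          refine ge_of_tendsto htendm ?_
          filter_upwards [eventually_ge_atTop 1] with m hm
          exact hkey m hm
        exact norm_le_zero_iff.mp hle
      have han : AnalyticOnNhd ℂ (fun lam : ℂ => H (lam • x) - lam • x) (ball 0 ρ) :=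
        hφd.analyticOnNhd isOpen_ball
      have hEq := han.eqOn_zero_of_preconnected_of_eventuallyEq_zero
        (convex_ball (0:ℂ) ρ).isPreconnected (mem_ball_self hρpos)
        (eventually_of_mem (ball_mem_nhds _ hσpos) hvanish)
      have h1m : (1:ℂ) ∈ ball (0:ℂ) ρ := by
        rw [mem_ball, dist_zero_right, norm_one]; exact hρ1
      have h2 := hEq h1m
      simp only [one_smul, Pi.zero_apply] at h2
      exact sub_eq_zero.mp h2
  -- propagate to all of D
  have hHdiff : DifferentiableOn ℂ (fun w => H w - w) D := hH.sub differentiableOn_id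
  have hprop := vanish_propagate hD_open hD_conn hHdiff hr₀ hr₀D
    (fun y hy => sub_eq_zero.mpr (hball_eq y hy))
  intro x hx
  exact sub_eq_zero.mp (hprop x hx)

/-- H. Cartan: an automorphism of a bounded circular domain containing 0 which fixes 0
is the restriction of an invertible linear map. -/
theorem cartan_circular_linear {d : ℕ} (D : Set (Fin d → ℂ))
    (hD_open : IsOpen D) (hD_conn : IsConnected D) (hD_bdd : Bornology.IsBounded D)
    (h0 : (0 : Fin d → ℂ) ∈ D)
    (hcirc : ∀ lam : ℂ, ‖lam‖ = 1 → ∀ z ∈ D, lam • z ∈ D)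
    (F G : (Fin d → ℂ) → (Fin d → ℂ))
    (hF : DifferentiableOn ℂ F D) (hFD : Set.MapsTo F D D)
    (hG : DifferentiableOn ℂ G D) (hGD : Set.MapsTo G D D)
    (hGF : ∀ z ∈ D, G (F z) = z) (hFG : ∀ z ∈ D, F (G z) = z)
    (hfix : F 0 = 0) :
    ∃ L : (Fin d → ℂ) ≃ₗ[ℂ] (Fin d → ℂ), Set.EqOn F (⇑L) D := by
  have hG0 : G 0 = 0 := by have := hGF 0 h0; rwa [hfix] at this
  have hDnhds : D ∈ 𝓝 (0 : Fin d → ℂ) := hD_open.mem_nhds h0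
  have hFdA : DifferentiableAt ℂ F 0 := hF.differentiableAt hDnhds
  have hGdA : DifferentiableAt ℂ G 0 := hG.differentiableAt hDnhds
  set L := fderiv ℂ F 0 with hL
  set M := fderiv ℂ G 0 with hM
  have hML : M.comp L = ContinuousLinearMap.id ℂ (Fin d → ℂ) := by
    have hg : HasFDerivAt G M (F 0) := by rw [hfix]; exact hGdA.hasFDerivAt
    have hcomp : HasFDerivAt (G ∘ F) (M.comp L) 0 := hg.comp 0 hFdA.hasFDerivAt
    have hev : (G ∘ F) =ᶠ[𝓝 (0 : Fin d → ℂ)] id := by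
      filter_upwards [hDnhds] with w hw
      exact hGF w hw
    have h1 : fderiv ℂ (G ∘ F) 0 = fderiv ℂ (id : (Fin d → ℂ) → (Fin d → ℂ)) 0 :=
      hev.fderiv_eq
    rw [fderiv_id] at h1
    rw [← hcomp.fderiv, h1]
  have hLM : L.comp M = ContinuousLinearMap.id ℂ (Fin d → ℂ) := by
    have hg : HasFDerivAt F L (G 0) := by rw [hG0]; exact hFdA.hasFDerivAt
    have hcomp : HasFDerivAt (F ∘ G) (L.comp M) 0 := hg.comp 0 hGdA.hasFDerivAt
    have hev : (F ∘ G) =ᶠ[𝓝 (0 : Fin d → ℂ)] id := by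
      filter_upwards [hDnhds] with w hw
      exact hFG w hw
    have h1 : fderiv ℂ (F ∘ G) 0 = fderiv ℂ (id : (Fin d → ℂ) → (Fin d → ℂ)) 0 :=
      hev.fderiv_eq
    rw [fderiv_id] at h1
    rw [← hcomp.fderiv, h1]
  have hMLfun : ∀ v, M (L v) = v := by
    intro v
    have h1 : (M.comp L) v = v := by rw [hML]; rfl
    simpa using h1
  have hLMfun : ∀ v, L (M v) = v := by
    intro v
    have h1 : (L.comp M) v = v := by rw [hLM]; rfl
    simpa using h1
  -- Step 2: circle equivariance
  have hequiv : ∀ lam : ℂ, ‖lam‖ = 1 → ∀ z ∈ D, F (lam • z) = lam • F z := by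
    intro lam hlam z hzD
    have hlamne : lam ≠ 0 := by
      intro h; rw [h, norm_zero] at hlam; norm_num at hlam
    have hlaminv : ‖lam⁻¹‖ = 1 := by rw [norm_inv, hlam]; norm_num
    set Φ : (Fin d → ℂ) → (Fin d → ℂ) := fun w => G (lam⁻¹ • F (lam • w)) with hΦ
    have hΦmem : ∀ w ∈ D, lam⁻¹ • F (lam • w) ∈ D := fun w hw =>
      hcirc _ hlaminv _ (hFD (hcirc _ hlam _ hw))
    have hΦD : Set.MapsTo Φ D D := fun w hw => hGD (hΦmem w hw)
    have hΦdiff : DifferentiableOn ℂ Φ D := by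
      intro w hw
      have h1 : DifferentiableAt ℂ (fun w : Fin d → ℂ => lam • w) w :=
        (differentiable_id.const_smul lam).differentiableAt
      have h2 : DifferentiableAt ℂ F (lam • w) :=
        hF.differentiableAt (hD_open.mem_nhds (hcirc _ hlam _ hw))
      have h3 : DifferentiableAt ℂ (fun v : Fin d → ℂ => lam⁻¹ • v) (F (lam • w)) :=
        (differentiable_id.const_smul lam⁻¹).differentiableAt
      have h4 : DifferentiableAt ℂ G (lam⁻¹ • F (lam • w)) :=
        hG.differentiableAt (hD_open.mem_nhds (hΦmem w hw))
      have hFB := h2.comp w h1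
      have hAFB := h3.comp w hFB
      exact (h4.comp w hAFB).differentiableWithinAt
    have hΦ0 : Φ 0 = 0 := by
      rw [hΦ]
      simp only [smul_zero, hfix, hG0]
    have hΦd : fderiv ℂ Φ 0 = ContinuousLinearMap.id ℂ (Fin d → ℂ) := by
      have hB : HasFDerivAt (fun w : Fin d → ℂ => lam • w)
          (lam • ContinuousLinearMap.id ℂ (Fin d → ℂ)) 0 :=
        (hasFDerivAt_id (0 : Fin d → ℂ)).const_smul lam
      have hFd : HasFDerivAt F L (lam • (0 : Fin d → ℂ)) := by
        rw [smul_zero]; exact hFdA.hasFDerivAt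
      have hA : HasFDerivAt (fun v : Fin d → ℂ => lam⁻¹ • v)
          (lam⁻¹ • ContinuousLinearMap.id ℂ (Fin d → ℂ)) (F (lam • (0 : Fin d → ℂ))) :=
        (hasFDerivAt_id _).const_smul lam⁻¹
      have hGd' : HasFDerivAt G M (lam⁻¹ • F (lam • (0 : Fin d → ℂ))) := by
        rw [smul_zero, hfix, smul_zero]
        exact hGdA.hasFDerivAt
      have hcomp := hGd'.comp 0 (hA.comp 0 (hFd.comp 0 hB))
      have hval : fderiv ℂ Φ 0
          = (M.comp ((lam⁻¹ • ContinuousLinearMap.id ℂ (Fin d → ℂ)).comp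
            (L.comp (lam • ContinuousLinearMap.id ℂ (Fin d → ℂ))))) := hcomp.fderiv
      rw [hval]
      refine ContinuousLinearMap.ext fun w => ?_
      simp only [ContinuousLinearMap.coe_comp', Function.comp_apply,
        ContinuousLinearMap.smul_apply, ContinuousLinearMap.id_apply,
        ContinuousLinearMap.coe_id']
      rw [map_smul L, smul_smul, inv_mul_cancel₀ hlamne, one_smul]
      exact hMLfun w
    have hEq := cartan_uniqueness_s1 hD_open hD_conn.isPreconnected hD_bdd h0 hΦdiff hΦD hΦ0 hΦd
    have hid : Φ z = z := hEq hzD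
    have h5 : F (Φ z) = F z := by rw [hid]
    rw [hΦ] at h5
    simp only at h5
    rw [hFG _ (hΦmem z hzD)] at h5
    calc F (lam • z) = lam • (lam⁻¹ • F (lam • z)) := by
          rw [smul_smul, mul_inv_cancel₀ hlamne, one_smul]
      _ = lam • F z := by rw [h5]
  -- Step 3: F = L on a ball
  obtain ⟨r₀, hr₀, hr₀D⟩ := Metric.isOpen_iff.mp hD_open 0 h0
  have hballF : ∀ x ∈ ball (0 : Fin d → ℂ) r₀, F x = L x := by
    intro x hx
    rcases eq_or_ne x 0 with rfl | hxne
    · rw [hfix, map_zero]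
    · have hxr : ‖x‖ < r₀ := by rwa [mem_ball, dist_zero_right] at hx
      have hxpos : 0 < ‖x‖ := norm_pos_iff.mpr hxne
      set ρ : ℝ := r₀/‖x‖ with hρdef
      have hρ1 : 1 < ρ := by rw [hρdef, lt_div_iff₀ hxpos, one_mul]; exact hxr
      have hρpos : 0 < ρ := lt_trans one_pos hρ1
      have hcurve : ∀ w : ℂ, w ∈ ball (0:ℂ) ρ → w • x ∈ D := by
        intro w hw
        rw [mem_ball, dist_zero_right] at hw
        apply hr₀D
        rw [mem_ball, dist_zero_right, norm_smul]
        calc ‖w‖ * ‖x‖ < ρ * ‖x‖ := mul_lt_mul_of_pos_right hw hxpos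
          _ = r₀ := div_mul_cancel₀ _ (ne_of_gt hxpos)
      have hφd : DifferentiableOn ℂ (fun w : ℂ => F (w • x) - w • F x) (ball 0 ρ) := by
        intro w hw
        have h1 : DifferentiableAt ℂ (fun w : ℂ => w • x) w :=
          (differentiable_id.smul_const x).differentiableAt
        have h2 : DifferentiableAt ℂ F (w • x) :=
          hF.differentiableAt (hD_open.mem_nhds (hcurve w hw))
        exact ((h2.comp w h1).sub
          (differentiable_id.smul_const (F x)).differentiableAt).differentiableWithinAt
      have han : AnalyticOnNhd ℂ (fun w : ℂ => F (w • x) - w • F x) (ball 0 ρ) :=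
        hφd.analyticOnNhd isOpen_ball
      -- frequently zero near 1
      have hfreq : ∃ᶠ w in 𝓝[≠] (1:ℂ), F (w • x) - w • F x = 0 := by
        refine freq_unimodular.mono fun w hw => ?_
        rw [hequiv w hw x (hr₀D hx), sub_self]
      have h1m : (1:ℂ) ∈ ball (0:ℂ) ρ := by
        rw [mem_ball, dist_zero_right, norm_one]; exact hρ1
      have hEq := han.eqOn_zero_of_preconnected_of_frequently_eq_zero
        (convex_ball (0:ℂ) ρ).isPreconnected h1m hfreq
      -- derivative at 0
      have hzero : (fun w : ℂ => F (w • x) - w • F x) =ᶠ[𝓝 (0:ℂ)] fun _ => 0 := by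
        filter_upwards [ball_mem_nhds (0:ℂ) hρpos] with w hw
        exact hEq hw
      have hd1 : HasDerivAt (fun w : ℂ => F (w • x)) (L x) 0 := by
        have curve : HasDerivAt (fun w : ℂ => w • x) x 0 := by
          simpa using (hasDerivAt_id (0:ℂ)).smul_const x
        have hFd : HasFDerivAt F L ((0:ℂ) • x) := by
          rw [zero_smul]; exact hFdA.hasFDerivAt
        exact hFd.comp_hasDerivAt 0 curve
      have hd2 : HasDerivAt (fun w : ℂ => w • F x) (F x) 0 := by
        simpa using (hasDerivAt_id (0:ℂ)).smul_const (F x)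
      have hd := hd1.sub hd2
      have hdz : HasDerivAt (fun _ : ℂ => (0 : Fin d → ℂ)) (L x - F x) 0 :=
        hd.congr_of_eventuallyEq hzero.symm
      have hconst : HasDerivAt (fun _ : ℂ => (0 : Fin d → ℂ)) 0 0 := hasDerivAt_const _ _
      have h0' : L x - F x = 0 := hdz.unique hconst
      have := sub_eq_zero.mp h0'
      exact this.symm
  -- Step 4: conclude
  have hdiff : DifferentiableOn ℂ (fun w => F w - L w) D :=
    hF.sub L.differentiable.differentiableOn
  have hprop := vanish_propagate hD_open hD_conn.isPreconnected hdiff hr₀ hr₀D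
    (fun y hy => sub_eq_zero.mpr (hballF y hy))
  refine ⟨LinearEquiv.ofLinear (L : (Fin d → ℂ) →ₗ[ℂ] (Fin d → ℂ))
    (M : (Fin d → ℂ) →ₗ[ℂ] (Fin d → ℂ)) ?_ ?_, ?_⟩
  · refine LinearMap.ext fun v => ?_
    simpa using hLMfun v
  · refine LinearMap.ext fun v => ?_
    simpa using hMLfun v
  · intro x hx
    have hFx : F x = L x := sub_eq_zero.mp (hprop x hx)
    simpa [LinearEquiv.ofLinear_apply] using hFx
end

section
/- For any n × n complex matrix Z with operator norm ‖Z‖ < 1 and any a ∈ ℂ with |a| < 1, the matrix Möbius transform m(Z) = (Z - a·I)(I - conj(a)·Z)⁻¹ satisfies ‖m(Z)‖ < 1. -/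
open scoped Matrix.Norms.L2Operator InnerProductSpace
open Matrix

private lemma re_conj_mul (b c : ℂ) :
    ((starRingEnd ℂ) b * c).re = (b * (starRingEnd ℂ) c).re := by
  simp [Complex.mul_re, Complex.conj_re, Complex.conj_im]

set_option maxHeartbeats 1000000 in
/-- The matrix Möbius transform `(Z - aI)(I - conj a · Z)⁻¹` maps the matrix unit ball
into itself (operator norm). -/
theorem mobius_matrix_maps_ball {n : ℕ} (Z : Matrix (Fin n) (Fin n) ℂ) (hZ : ‖Z‖ < 1)
    (a : ℂ) (ha : ‖a‖ < 1) :
    ‖(Z - a • 1) * (1 - (starRingEnd ℂ) a • Z)⁻¹‖ < 1 := by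
  have ha2 : ‖(starRingEnd ℂ) a‖ = ‖a‖ := RCLike.norm_conj a
  have hZ0 : (0:ℝ) ≤ ‖Z‖ := norm_nonneg Z
  have ha0 : (0:ℝ) ≤ ‖a‖ := norm_nonneg a
  have hA : (0:ℝ) ≤ 1 - ‖a‖^2 := by nlinarith
  have hB0 : (0:ℝ) ≤ 1 - ‖Z‖^2 := by nlinarith
  have hsm : ‖(starRingEnd ℂ) a • Z‖ < 1 := by
    rw [norm_smul, ha2]; nlinarith
  let u : (Matrix (Fin n) (Fin n) ℂ)ˣ := Units.oneSub _ hsm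
  have huval : (u : Matrix (Fin n) (Fin n) ℂ) = 1 - (starRingEnd ℂ) a • Z := rfl
  set B : Matrix (Fin n) (Fin n) ℂ := (↑u⁻¹ : Matrix (Fin n) (Fin n) ℂ) with hBdef
  have hui : (1 - (starRingEnd ℂ) a • Z)⁻¹ = B := by
    rw [nonsing_inv_eq_ringInverse, ← huval, hBdef, Ring.inverse_unit]
  have hmul1 : (1 - (starRingEnd ℂ) a • Z) * B = 1 := by
    rw [← huval, hBdef]; exact u.mul_inv
  have hmul2 : B * (1 - (starRingEnd ℂ) a • Z) = 1 := by
    rw [← huval, hBdef]; exact u.inv_mul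
  clear_value B
  rw [hui]
  set M := (Z - a • 1) * B with hM
  clear_value M
  set δ : ℝ := (1 - ‖a‖^2) * (1 - ‖Z‖^2) / 4 with hδ
  clear_value δ
  have hδpos : 0 < δ := by
    have h1 : 0 < 1 - ‖a‖^2 := by nlinarith
    have h2 : 0 < 1 - ‖Z‖^2 := by nlinarith
    rw [hδ]; positivity
  have hδ1 : δ < 1 := by
    have h1 : (1 - ‖a‖^2) * (1 - ‖Z‖^2) ≤ 1 := by nlinarith
    rw [hδ]; linarith
  set φ := Matrix.toEuclideanCLM (n := Fin n) (𝕜 := ℂ) with hφ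
  have hφZ : ‖φ Z‖ = ‖Z‖ := rfl
  have hφM : ‖φ M‖ = ‖M‖ := rfl
  clear_value φ
  have hbound : ∀ x : EuclideanSpace ℂ (Fin n), ‖φ M x‖ ≤ Real.sqrt (1 - δ) * ‖x‖ := by
    intro x
    set y : EuclideanSpace ℂ (Fin n) := φ B x with hy
    clear_value y
    set w : EuclideanSpace ℂ (Fin n) := φ Z y with hw
    clear_value w
    have hsubapp : ∀ v : EuclideanSpace ℂ (Fin n),
        φ (1 - (starRingEnd ℂ) a • Z) v = v - (starRingEnd ℂ) a • φ Z v := by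
      intro v
      rw [_root_.map_sub, _root_.map_one, _root_.map_smul]
      rfl
    have hx : x = y - (starRingEnd ℂ) a • w := by
      have h0 : φ ((1 - (starRingEnd ℂ) a • Z) * B) x = x := by
        rw [hmul1, _root_.map_one]; rfl
      rw [_root_.map_mul, ContinuousLinearMap.mul_apply, ← hy, hsubapp y, ← hw] at h0
      exact h0.symm
    have h2 : φ (1 - (starRingEnd ℂ) a • Z) y = x := by rw [hsubapp y, ← hw, ← hx]
    have hMx : φ M x = w - a • y := by
      have h1 : M * (1 - (starRingEnd ℂ) a • Z) = Z - a • 1 := by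
        rw [hM, mul_assoc, hmul2, mul_one]
      have e : φ (M * (1 - (starRingEnd ℂ) a • Z)) y = φ M x := by
        rw [_root_.map_mul, ContinuousLinearMap.mul_apply, h2]
      rw [h1] at e
      rw [← e, _root_.map_sub, _root_.map_smul, _root_.map_one]
      rw [ContinuousLinearMap.sub_apply, ContinuousLinearMap.smul_apply,
        ContinuousLinearMap.one_apply, hw]
    have hkey : ‖y - (starRingEnd ℂ) a • w‖^2 - ‖w - a • y‖^2
        = (1 - ‖a‖^2) * (‖y‖^2 - ‖w‖^2) := by
      have e1 : ‖y - (starRingEnd ℂ) a • w‖^2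
          = ‖y‖^2 - 2 * Complex.re ((starRingEnd ℂ) a * ⟪y, w⟫_ℂ) + ‖a‖^2 * ‖w‖^2 := by
        rw [@norm_sub_sq ℂ, inner_smul_right, norm_smul, ha2, mul_pow]
        simp [RCLike.re_to_complex]
      have e2 : ‖w - a • y‖^2
          = ‖w‖^2 - 2 * Complex.re (a * ⟪w, y⟫_ℂ) + ‖a‖^2 * ‖y‖^2 := by
        rw [@norm_sub_sq ℂ, inner_smul_right, norm_smul, mul_pow]
        simp [RCLike.re_to_complex]
      have e3 : Complex.re ((starRingEnd ℂ) a * ⟪y, w⟫_ℂ) = Complex.re (a * ⟪w, y⟫_ℂ) := by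
        have hc : ⟪w, y⟫_ℂ = (starRingEnd ℂ) ⟪y, w⟫_ℂ := (inner_conj_symm _ _).symm
        rw [hc]
        exact re_conj_mul a ⟪y, w⟫_ℂ
      rw [e1, e2, e3]; ring
    have hwle : ‖w‖ ≤ ‖Z‖ * ‖y‖ := by
      have h := (φ Z).le_opNorm y
      rw [hφZ] at h
      rw [hw]; exact h
    have hy0 : (0:ℝ) ≤ ‖y‖ := norm_nonneg y
    have hx0 : (0:ℝ) ≤ ‖x‖ := norm_nonneg x
    have hw0 : (0:ℝ) ≤ ‖w‖ := norm_nonneg w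
    have hxle : ‖x‖ ≤ 2 * ‖y‖ := by
      rw [hx]
      calc ‖y - (starRingEnd ℂ) a • w‖ ≤ ‖y‖ + ‖(starRingEnd ℂ) a • w‖ := norm_sub_le _ _
        _ = ‖y‖ + ‖a‖ * ‖w‖ := by rw [norm_smul, ha2]
        _ ≤ 2 * ‖y‖ := by nlinarith
    have hsq : ‖w - a • y‖^2 ≤ (1 - δ) * ‖x‖^2 := by
      have h1 : ‖x‖^2 ≤ 4 * ‖y‖^2 := by nlinarith
      have h2' : ‖w‖^2 ≤ ‖Z‖^2 * ‖y‖^2 := by nlinarith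
      have h3 := hkey
      rw [← hx] at h3
      have h4 : δ * ‖x‖^2 ≤ (1 - ‖a‖^2) * (‖y‖^2 - ‖w‖^2) := by
        rw [hδ]
        nlinarith [mul_le_mul_of_nonneg_left h1 (mul_nonneg hA hB0),
          mul_le_mul_of_nonneg_left h2' hA]
      nlinarith
    rw [hMx]
    calc ‖w - a • y‖ = Real.sqrt (‖w - a • y‖^2) := by
          rw [Real.sqrt_sq (norm_nonneg _)]
      _ ≤ Real.sqrt ((1 - δ) * ‖x‖^2) := Real.sqrt_le_sqrt hsq
      _ = Real.sqrt (1 - δ) * ‖x‖ := by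
          rw [Real.sqrt_mul (by linarith), Real.sqrt_sq hx0]
  have hnorm : ‖M‖ ≤ Real.sqrt (1 - δ) := by
    rw [← hφM]
    exact ContinuousLinearMap.opNorm_le_bound _ (Real.sqrt_nonneg _) hbound
  have hlt : Real.sqrt (1 - δ) < 1 := by
    have := Real.sqrt_lt_sqrt (by linarith : (0:ℝ) ≤ 1 - δ) (by linarith : 1 - δ < 1)
    simpa using this
  linarith
end

section
/- Let A, Z, W be p × q complex matrices with ‖A‖ < 1, ‖Z‖ < 1, ‖W‖ < 1, and define H_A(x) = (I_p - AA*)^{-1/2}(x + A)(I_q + A*x)⁻¹(I_q - A*A)^{1/2}. Then I_q - H_A(W)* H_A(Z) = (I_q - A*A)^{1/2}(I_q + W*A)⁻¹(I_q - W*Z)(I_q + A*Z)⁻¹(I_q - A*A)^{1/2}. -/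
open scoped Matrix.Norms.L2Operator ComplexOrder
open Matrix

/-- The positive semidefinite square root of a positive semidefinite matrix
(the definition of `Matrix.PosSemidef.sqrt` in the older Mathlib, since removed). -/
noncomputable def Matrix.PosSemidef.sqrt {n : Type*} {𝕜 : Type*} [Fintype n] [RCLike 𝕜]
    [DecidableEq n] {A : Matrix n n 𝕜} (hA : A.PosSemidef) : Matrix n n 𝕜 :=
  hA.1.eigenvectorUnitary.1 * diagonal ((↑) ∘ (√·) ∘ hA.1.eigenvalues) *
  (star hA.1.eigenvectorUnitary : Matrix n n 𝕜)

theorem Matrix.PosSemidef.posSemidef_sqrt {n : Type*} {𝕜 : Type*} [Fintype n] [RCLike 𝕜]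
    [DecidableEq n] {A : Matrix n n 𝕜} (hA : A.PosSemidef) : hA.sqrt.PosSemidef := by
  unfold Matrix.PosSemidef.sqrt
  have hD : (diagonal ((↑) ∘ (√·) ∘ hA.1.eigenvalues) : Matrix n n 𝕜).PosSemidef := by
    rw [posSemidef_diagonal_iff]
    intro i
    simp only [Function.comp_apply]
    exact_mod_cast Real.sqrt_nonneg _
  have := hD.mul_mul_conjTranspose_same (hA.1.eigenvectorUnitary : Matrix n n 𝕜)
  simpa [Matrix.star_eq_conjTranspose] using this

theorem Matrix.PosSemidef.sqrt_mul_self {n : Type*} {𝕜 : Type*} [Fintype n] [RCLike 𝕜]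
    [DecidableEq n] {A : Matrix n n 𝕜} (hA : A.PosSemidef) : hA.sqrt * hA.sqrt = A := by
  unfold Matrix.PosSemidef.sqrt
  have hU : (star hA.1.eigenvectorUnitary : Matrix n n 𝕜) * hA.1.eigenvectorUnitary.1 = 1 :=
    Unitary.coe_star_mul_self _
  have hDD : (diagonal ((↑) ∘ (√·) ∘ hA.1.eigenvalues) : Matrix n n 𝕜) *
      diagonal ((↑) ∘ (√·) ∘ hA.1.eigenvalues) = diagonal (RCLike.ofReal ∘ hA.1.eigenvalues) := by
    rw [diagonal_mul_diagonal]
    congr 1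
    funext i
    simp only [Function.comp_apply]
    rw [← RCLike.ofReal_mul, Real.mul_self_sqrt (hA.eigenvalues_nonneg i)]
  conv_rhs => rw [hA.1.spectral_theorem]
  simp only [Matrix.mul_assoc]
  rw [← Matrix.mul_assoc _ hA.1.eigenvectorUnitary.1, hU, Matrix.one_mul,
    ← Matrix.mul_assoc (diagonal _) (diagonal _), hDD]
  simp [Unitary.conjStarAlgAut_apply, Matrix.mul_assoc]


/-- The nc-ball automorphism `H_A(Z) = (I-AA*)^{-1/2}(Z+A)(I+A*Z)⁻¹(I-A*A)^{1/2}`,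
written using the positive semidefinite square roots of `I - AA*` and `I - A*A`. -/
noncomputable def ballMobius {p q : ℕ} (A : Matrix (Fin p) (Fin q) ℂ)
    (hP : (1 - A * Aᴴ).PosSemidef) (hQ : (1 - Aᴴ * A).PosSemidef)
    (Z : Matrix (Fin p) (Fin q) ℂ) : Matrix (Fin p) (Fin q) ℂ :=
  hP.sqrt⁻¹ * (Z + A) * (1 + Aᴴ * Z)⁻¹ * hQ.sqrt

set_option maxHeartbeats 1600000 in
/-- The key identity `I - H_A(W)* H_A(Z)
  = (I-A*A)^{1/2}(I+W*A)⁻¹(I-W*Z)(I+A*Z)⁻¹(I-A*A)^{1/2}`. -/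
theorem ballMobius_key_identity {p q : ℕ} (A Z W : Matrix (Fin p) (Fin q) ℂ)
    (hA : ‖A‖ < 1) (hZ : ‖Z‖ < 1) (hW : ‖W‖ < 1)
    (hP : (1 - A * Aᴴ).PosSemidef) (hQ : (1 - Aᴴ * A).PosSemidef) :
    1 - (ballMobius A hP hQ W)ᴴ * ballMobius A hP hQ Z =
      hQ.sqrt * (1 + Wᴴ * A)⁻¹ * (1 - Wᴴ * Z) * (1 + Aᴴ * Z)⁻¹ * hQ.sqrt := by
  have hA0 : (0:ℝ) ≤ ‖A‖ := norm_nonneg A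
  have hZ0 : (0:ℝ) ≤ ‖Z‖ := norm_nonneg Z
  have hW0 : (0:ℝ) ≤ ‖W‖ := norm_nonneg W
  -- invertibility of P and Q
  have hPu : IsUnit (1 - A * Aᴴ) := by
    refine isUnit_one_sub_of_norm_lt_one ?_
    calc ‖A * Aᴴ‖ ≤ ‖A‖ * ‖Aᴴ‖ := Matrix.l2_opNorm_mul A Aᴴ
      _ = ‖A‖ * ‖A‖ := by rw [Matrix.l2_opNorm_conjTranspose]
      _ < 1 := by nlinarith
  have hQu : IsUnit (1 - Aᴴ * A) := by
    refine isUnit_one_sub_of_norm_lt_one ?_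
    calc ‖Aᴴ * A‖ ≤ ‖Aᴴ‖ * ‖A‖ := Matrix.l2_opNorm_mul Aᴴ A
      _ = ‖A‖ * ‖A‖ := by rw [Matrix.l2_opNorm_conjTranspose]
      _ < 1 := by nlinarith
  have hPd : IsUnit (1 - A * Aᴴ).det := (Matrix.isUnit_iff_isUnit_det _).mp hPu
  have hQd : IsUnit (1 - Aᴴ * A).det := (Matrix.isUnit_iff_isUnit_det _).mp hQu
  -- invertibility of 1 + Aᴴ Z and 1 + Wᴴ A
  have hMu : IsUnit ((1 : Matrix (Fin q) (Fin q) ℂ) + Aᴴ * Z) := by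
    have h : ‖-(Aᴴ * Z)‖ < 1 := by
      rw [norm_neg]
      calc ‖Aᴴ * Z‖ ≤ ‖Aᴴ‖ * ‖Z‖ := Matrix.l2_opNorm_mul Aᴴ Z
        _ = ‖A‖ * ‖Z‖ := by rw [Matrix.l2_opNorm_conjTranspose]
        _ < 1 := by nlinarith
    simpa [sub_neg_eq_add] using isUnit_one_sub_of_norm_lt_one h
  have hNu : IsUnit ((1 : Matrix (Fin q) (Fin q) ℂ) + Wᴴ * A) := by
    have h : ‖-(Wᴴ * A)‖ < 1 := by
      rw [norm_neg]
      calc ‖Wᴴ * A‖ ≤ ‖Wᴴ‖ * ‖A‖ := Matrix.l2_opNorm_mul Wᴴ A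
        _ = ‖W‖ * ‖A‖ := by rw [Matrix.l2_opNorm_conjTranspose]
        _ < 1 := by nlinarith
    simpa [sub_neg_eq_add] using isUnit_one_sub_of_norm_lt_one h
  have hMd : IsUnit ((1 : Matrix (Fin q) (Fin q) ℂ) + Aᴴ * Z).det :=
    (Matrix.isUnit_iff_isUnit_det _).mp hMu
  have hNd : IsUnit ((1 : Matrix (Fin q) (Fin q) ℂ) + Wᴴ * A).det :=
    (Matrix.isUnit_iff_isUnit_det _).mp hNu
  -- square roots
  have hSd : IsUnit hQ.sqrt.det := by
    have h2 : hQ.sqrt.det * hQ.sqrt.det = (1 - Aᴴ * A).det := by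
      rw [← Matrix.det_mul, hQ.sqrt_mul_self]
    exact isUnit_of_mul_isUnit_left (h2 ▸ hQd)
  have hRd : IsUnit hP.sqrt.det := by
    have h2 : hP.sqrt.det * hP.sqrt.det = (1 - A * Aᴴ).det := by
      rw [← Matrix.det_mul, hP.sqrt_mul_self]
    exact isUnit_of_mul_isUnit_left (h2 ▸ hPd)
  -- commutation facts
  have comm : A * (1 - Aᴴ * A) = (1 - A * Aᴴ) * A := by
    rw [Matrix.mul_sub, Matrix.sub_mul, Matrix.mul_one, Matrix.one_mul, Matrix.mul_assoc]
  have f1 : A * (1 - Aᴴ * A)⁻¹ = (1 - A * Aᴴ)⁻¹ * A := by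
    calc A * (1 - Aᴴ * A)⁻¹
        = ((1 - A * Aᴴ)⁻¹ * (1 - A * Aᴴ)) * (A * (1 - Aᴴ * A)⁻¹) := by
          rw [Matrix.nonsing_inv_mul _ hPd, Matrix.one_mul]
      _ = (1 - A * Aᴴ)⁻¹ * (((1 - A * Aᴴ) * A) * (1 - Aᴴ * A)⁻¹) := by
          rw [Matrix.mul_assoc ((1 - A * Aᴴ)⁻¹) (1 - A * Aᴴ) _,
            ← Matrix.mul_assoc (1 - A * Aᴴ) A _]
      _ = (1 - A * Aᴴ)⁻¹ * ((A * (1 - Aᴴ * A)) * (1 - Aᴴ * A)⁻¹) := by rw [← comm]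
      _ = (1 - A * Aᴴ)⁻¹ * (A * ((1 - Aᴴ * A) * (1 - Aᴴ * A)⁻¹)) := by
          rw [Matrix.mul_assoc A _ _]
      _ = (1 - A * Aᴴ)⁻¹ * A := by rw [Matrix.mul_nonsing_inv _ hQd, Matrix.mul_one]
  have f2 : (1 - Aᴴ * A)⁻¹ * Aᴴ = Aᴴ * (1 - A * Aᴴ)⁻¹ := by
    have h := congrArg conjTranspose f1
    simpa [Matrix.conjTranspose_nonsing_inv, hP.isHermitian.eq, hQ.isHermitian.eq] using h
  have f5 : (1 - A * Aᴴ)⁻¹ * (A * Aᴴ) = (1 - A * Aᴴ)⁻¹ - 1 := by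
    have h1 : (1 - A * Aᴴ)⁻¹ * (1 - A * Aᴴ) = 1 := Matrix.nonsing_inv_mul _ hPd
    calc (1 - A * Aᴴ)⁻¹ * (A * Aᴴ)
        = (1 - A * Aᴴ)⁻¹ - (1 - A * Aᴴ)⁻¹ * (1 - A * Aᴴ) := by
          rw [Matrix.mul_sub, Matrix.mul_one]; abel
      _ = (1 - A * Aᴴ)⁻¹ - 1 := by rw [h1]
  have f3 : Aᴴ * ((1 - A * Aᴴ)⁻¹ * A) = (1 - Aᴴ * A)⁻¹ - 1 := by
    rw [← Matrix.mul_assoc, ← f2, Matrix.mul_assoc]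
    have h1 : (1 - Aᴴ * A)⁻¹ * (1 - Aᴴ * A) = 1 := Matrix.nonsing_inv_mul _ hQd
    calc (1 - Aᴴ * A)⁻¹ * (Aᴴ * A)
        = (1 - Aᴴ * A)⁻¹ - (1 - Aᴴ * A)⁻¹ * (1 - Aᴴ * A) := by
          rw [Matrix.mul_sub, Matrix.mul_one]; abel
      _ = (1 - Aᴴ * A)⁻¹ - 1 := by rw [h1]
  have t2 : Wᴴ * A * (1 - Aᴴ * A)⁻¹ = Wᴴ * ((1 - A * Aᴴ)⁻¹ * A) := by
    rw [Matrix.mul_assoc, f1]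
  have t3 : (1 - Aᴴ * A)⁻¹ * (Aᴴ * Z) = Aᴴ * ((1 - A * Aᴴ)⁻¹ * Z) := by
    rw [← Matrix.mul_assoc, f2, Matrix.mul_assoc]
  have t4 : Wᴴ * A * (1 - Aᴴ * A)⁻¹ * (Aᴴ * Z)
      = Wᴴ * ((1 - A * Aᴴ)⁻¹ * Z) - Wᴴ * Z := by
    calc Wᴴ * A * (1 - Aᴴ * A)⁻¹ * (Aᴴ * Z)
        = Wᴴ * ((A * (1 - Aᴴ * A)⁻¹) * (Aᴴ * Z)) := by
          rw [Matrix.mul_assoc Wᴴ A _, Matrix.mul_assoc Wᴴ _ _]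
      _ = Wᴴ * (((1 - A * Aᴴ)⁻¹ * A) * (Aᴴ * Z)) := by rw [f1]
      _ = Wᴴ * ((1 - A * Aᴴ)⁻¹ * (A * Aᴴ) * Z) := by
          rw [Matrix.mul_assoc ((1 - A * Aᴴ)⁻¹) A _, ← Matrix.mul_assoc A Aᴴ Z,
            ← Matrix.mul_assoc ((1 - A * Aᴴ)⁻¹) (A * Aᴴ) Z]
      _ = Wᴴ * (((1 - A * Aᴴ)⁻¹ - 1) * Z) := by rw [f5]
      _ = Wᴴ * ((1 - A * Aᴴ)⁻¹ * Z) - Wᴴ * Z := by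
          rw [Matrix.sub_mul, Matrix.one_mul, Matrix.mul_sub]
  -- the core algebraic identity
  have key : (1 + Wᴴ * A) * (1 - Aᴴ * A)⁻¹ * (1 + Aᴴ * Z)
      - (Wᴴ + Aᴴ) * (1 - A * Aᴴ)⁻¹ * (Z + A) = 1 - Wᴴ * Z := by
    have expand : (1 + Wᴴ * A) * (1 - Aᴴ * A)⁻¹ * (1 + Aᴴ * Z)
        - (Wᴴ + Aᴴ) * (1 - A * Aᴴ)⁻¹ * (Z + A)
        = ((1 - Aᴴ * A)⁻¹ + Wᴴ * A * (1 - Aᴴ * A)⁻¹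
            + (1 - Aᴴ * A)⁻¹ * (Aᴴ * Z) + Wᴴ * A * (1 - Aᴴ * A)⁻¹ * (Aᴴ * Z))
          - (Wᴴ * ((1 - A * Aᴴ)⁻¹ * Z) + Wᴴ * ((1 - A * Aᴴ)⁻¹ * A)
            + Aᴴ * ((1 - A * Aᴴ)⁻¹ * Z) + Aᴴ * ((1 - A * Aᴴ)⁻¹ * A)) := by
      simp only [Matrix.mul_add, Matrix.add_mul, Matrix.mul_one, Matrix.one_mul,
        Matrix.mul_assoc]
      abel
    rw [expand, t4, t2, t3, f3]
    abel
  -- hermitian / sqrt facts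
  have hSH : hQ.sqrtᴴ = hQ.sqrt := hQ.posSemidef_sqrt.isHermitian.eq
  have hRH : hP.sqrtᴴ = hP.sqrt := hP.posSemidef_sqrt.isHermitian.eq
  have hRR : hP.sqrt⁻¹ * hP.sqrt⁻¹ = (1 - A * Aᴴ)⁻¹ := by
    rw [← Matrix.mul_inv_rev, hP.sqrt_mul_self]
  have hQQ : (1 - Aᴴ * A)⁻¹ = hQ.sqrt⁻¹ * hQ.sqrt⁻¹ := by
    rw [← Matrix.mul_inv_rev, hQ.sqrt_mul_self]
  have hSQS : hQ.sqrt * (1 - Aᴴ * A)⁻¹ * hQ.sqrt = 1 := by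
    rw [hQQ, ← Matrix.mul_assoc, Matrix.mul_nonsing_inv _ hSd, Matrix.one_mul,
      Matrix.nonsing_inv_mul _ hSd]
  -- conjugate transpose of H_A(W)
  have hct : (ballMobius A hP hQ W)ᴴ
      = hQ.sqrt * (1 + Wᴴ * A)⁻¹ * ((Wᴴ + Aᴴ) * hP.sqrt⁻¹) := by
    unfold ballMobius
    simp only [conjTranspose_mul, conjTranspose_add, conjTranspose_one,
      Matrix.conjTranspose_nonsing_inv, conjTranspose_conjTranspose, hSH, hRH,
      Matrix.mul_assoc]
  have hprod : (ballMobius A hP hQ W)ᴴ * ballMobius A hP hQ Z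
      = hQ.sqrt * (1 + Wᴴ * A)⁻¹ * ((Wᴴ + Aᴴ) * (1 - A * Aᴴ)⁻¹ * (Z + A))
        * (1 + Aᴴ * Z)⁻¹ * hQ.sqrt := by
    rw [hct]
    unfold ballMobius
    rw [← hRR]
    simp only [Matrix.mul_add, Matrix.add_mul, Matrix.mul_assoc]
  have hone : (1 : Matrix (Fin q) (Fin q) ℂ)
      = hQ.sqrt * (1 + Wᴴ * A)⁻¹ * ((1 + Wᴴ * A) * (1 - Aᴴ * A)⁻¹ * (1 + Aᴴ * Z))
        * (1 + Aᴴ * Z)⁻¹ * hQ.sqrt := by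
    calc (1 : Matrix (Fin q) (Fin q) ℂ)
        = hQ.sqrt * (1 - Aᴴ * A)⁻¹ * hQ.sqrt := hSQS.symm
      _ = hQ.sqrt * ((1 + Wᴴ * A)⁻¹ * (1 + Wᴴ * A)) * (1 - Aᴴ * A)⁻¹
          * (((1 + Aᴴ * Z) * (1 + Aᴴ * Z)⁻¹) * hQ.sqrt) := by
            rw [Matrix.nonsing_inv_mul _ hNd, Matrix.mul_nonsing_inv _ hMd,
              Matrix.mul_one, Matrix.one_mul]
      _ = hQ.sqrt * (1 + Wᴴ * A)⁻¹ * ((1 + Wᴴ * A) * (1 - Aᴴ * A)⁻¹ * (1 + Aᴴ * Z))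
          * (1 + Aᴴ * Z)⁻¹ * hQ.sqrt := by simp only [Matrix.mul_assoc]
  calc 1 - (ballMobius A hP hQ W)ᴴ * ballMobius A hP hQ Z
      = hQ.sqrt * (1 + Wᴴ * A)⁻¹ * ((1 + Wᴴ * A) * (1 - Aᴴ * A)⁻¹ * (1 + Aᴴ * Z))
          * (1 + Aᴴ * Z)⁻¹ * hQ.sqrt
        - hQ.sqrt * (1 + Wᴴ * A)⁻¹ * ((Wᴴ + Aᴴ) * (1 - A * Aᴴ)⁻¹ * (Z + A))
          * (1 + Aᴴ * Z)⁻¹ * hQ.sqrt := by rw [hprod, ← hone]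
    _ = hQ.sqrt * (1 + Wᴴ * A)⁻¹
          * ((1 + Wᴴ * A) * (1 - Aᴴ * A)⁻¹ * (1 + Aᴴ * Z)
            - (Wᴴ + Aᴴ) * (1 - A * Aᴴ)⁻¹ * (Z + A))
          * (1 + Aᴴ * Z)⁻¹ * hQ.sqrt := by
        simp only [Matrix.mul_sub, Matrix.sub_mul, Matrix.mul_add, Matrix.add_mul,
          Matrix.mul_one, Matrix.one_mul, Matrix.mul_assoc]
    _ = hQ.sqrt * (1 + Wᴴ * A)⁻¹ * (1 - Wᴴ * Z) * (1 + Aᴴ * Z)⁻¹ * hQ.sqrt := by rw [key]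
end

section
/- Let D = {z ∈ ℂ : |z| < 1} and let Ω₁ = D, and for some R > 1 suppose an automorphism condition: if φ is a Möbius automorphism of D given by φ(z) = e^{iθ}(z - a)(1 - conj(a) z)⁻¹, and the matrix extension φ(X) = e^{iθ}(X - aI)(I - conj(a) X)⁻¹ maps {X ∈ M₂(ℂ) : ‖X‖ < R} into itself, then a = 0. -/
open scoped Matrix.Norms.L2Operator
open Matrix

/-- If the matrix extension of the Möbius automorphism `z ↦ e^{iθ}(z-a)(1-conj a · z)⁻¹`
maps the radius-`R` ball of `M₂(ℂ)` (for some `R > 1`) into itself, then `a = 0`. -/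
theorem mobius_extension_radius_R (R : ℝ) (hR : 1 < R) (a : ℂ) (ha : ‖a‖ < 1) (θ : ℝ)
    (h : Set.MapsTo
      (fun X : Matrix (Fin 2) (Fin 2) ℂ =>
        Complex.exp (θ * Complex.I) • ((X - a • 1) * (1 - (starRingEnd ℂ) a • X)⁻¹))
      {X : Matrix (Fin 2) (Fin 2) ℂ | ‖X‖ < R} {X : Matrix (Fin 2) (Fin 2) ℂ | ‖X‖ < R}) :
    a = 0 := by
  by_contra ha0
  obtain ⟨t, ht, ht0, ht1⟩ : ∃ t : ℝ, ‖a‖ = t ∧ 0 < t ∧ t < 1 :=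
    ⟨‖a‖, rfl, norm_pos_iff.mpr ha0, ha⟩
  have hden : 0 < 1 + t * R := by positivity
  obtain ⟨r, hLr, hrR, htr, hrt1⟩ :
      ∃ r : ℝ, (R + t) / (1 + t * R) < r ∧ r < R ∧ t < r ∧ r * t < 1 := by
    set L := (R + t) / (1 + t * R) with hL
    have hLR : L < R := by
      rw [hL, div_lt_iff₀ hden]
      nlinarith [mul_pos ht0 (mul_pos (sub_pos.mpr hR) (by linarith : (0:ℝ) < R + 1))]
    have hLt : L < 1 / t := by rw [hL, div_lt_div_iff₀ hden ht0]; nlinarith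
    have htL : t < L := by rw [hL, lt_div_iff₀ hden]; nlinarith
    refine ⟨(L + min R (1/t)) / 2, ?_, ?_, ?_, ?_⟩
    · have := lt_min hLR hLt; linarith
    · have h1 := min_le_left R (1/t); linarith
    · have := lt_min hLR hLt; linarith
    · have h1 := min_le_right R (1/t)
      have h2 : (L + min R (1/t)) / 2 < 1 / t := by
        have := lt_min hLR hLt; linarith
      rw [lt_div_iff₀ ht0] at h2; exact h2
  have hr0 : 0 < r := lt_trans ht0 htr
  have htC : ((t : ℂ)) ≠ 0 := Complex.ofReal_ne_zero.mpr (ne_of_gt ht0)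
  set z : ℂ := ((r / t : ℝ) : ℂ) * a with hz
  have hnz : ‖z‖ = r := by
    rw [hz, norm_mul, Complex.norm_real, Real.norm_eq_abs,
      abs_of_pos (by positivity), ht]
    field_simp
  have hconj : (starRingEnd ℂ) a * z = ((r * t : ℝ) : ℂ) := by
    have h1 : (starRingEnd ℂ) a * a = ((t ^ 2 : ℝ) : ℂ) := by
      rw [← Complex.normSq_eq_conj_mul_self, Complex.normSq_eq_norm_sq]
      rw [ht]
    calc (starRingEnd ℂ) a * z = ((r / t : ℝ) : ℂ) * ((starRingEnd ℂ) a * a) := by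
          rw [hz]; ring
      _ = ((r * t : ℝ) : ℂ) := by rw [h1]; push_cast; field_simp
  have hza : ‖z - a‖ = r - t := by
    have he : z - a = ((r / t - 1 : ℝ) : ℂ) * a := by rw [hz]; push_cast; ring
    rw [he, norm_mul, Complex.norm_real, Real.norm_eq_abs, ht,
      abs_of_pos (by rw [lt_sub_iff_add_lt, zero_add, lt_div_iff₀ ht0, one_mul]; exact htr)]
    field_simp
  have hu : (1 : ℂ) - (starRingEnd ℂ) a * z = ((1 - r * t : ℝ) : ℂ) := by
    rw [hconj]; push_cast; ring
  have hu0 : (1 : ℂ) - (starRingEnd ℂ) a * z ≠ 0 := by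
    rw [hu]; exact Complex.ofReal_ne_zero.mpr (ne_of_gt (by linarith))
  -- matrix computation
  have hXmem : z • (1 : Matrix (Fin 2) (Fin 2) ℂ) ∈ {X : Matrix (Fin 2) (Fin 2) ℂ | ‖X‖ < R} := by
    simp only [Set.mem_setOf_eq, norm_smul, norm_one, mul_one, hnz]
    exact hrR
  have him := h hXmem
  simp only [Set.mem_setOf_eq] at him
  have heq : Complex.exp (θ * Complex.I) •
      ((z • (1 : Matrix (Fin 2) (Fin 2) ℂ) - a • 1) * (1 - (starRingEnd ℂ) a • z • (1 : Matrix (Fin 2) (Fin 2) ℂ))⁻¹)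
      = (Complex.exp (θ * Complex.I) * ((z - a) * ((1 : ℂ) - (starRingEnd ℂ) a * z)⁻¹)) •
        (1 : Matrix (Fin 2) (Fin 2) ℂ) := by
    have e1 : z • (1 : Matrix (Fin 2) (Fin 2) ℂ) - a • 1 = (z - a) • 1 := by
      rw [sub_smul]
    have e2 : (1 : Matrix (Fin 2) (Fin 2) ℂ) - (starRingEnd ℂ) a • z • (1 : Matrix (Fin 2) (Fin 2) ℂ)
        = ((1 : ℂ) - (starRingEnd ℂ) a * z) • 1 := by
      rw [smul_smul, sub_smul, one_smul]
    have e3 : (((1 : ℂ) - (starRingEnd ℂ) a * z) • (1 : Matrix (Fin 2) (Fin 2) ℂ))⁻¹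
        = ((1 : ℂ) - (starRingEnd ℂ) a * z)⁻¹ • 1 := by
      apply Matrix.inv_eq_right_inv
      rw [smul_mul_smul_comm, one_mul, mul_inv_cancel₀ hu0, one_smul]
    rw [e1, e2, e3, smul_mul_smul_comm, one_mul, smul_smul]
  rw [heq] at him
  rw [norm_smul, norm_one, mul_one, norm_mul, norm_mul,
    Complex.norm_exp_ofReal_mul_I, one_mul, hza, norm_inv, hu, Complex.norm_real,
    Real.norm_eq_abs, abs_of_pos (by linarith)] at him
  -- him : (r - t) * (1 - r*t)⁻¹ < R, but r > L implies the opposite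
  rw [div_lt_iff₀ hden] at hLr
  have hcontra : R * (1 - r * t) < r - t := by nlinarith
  rw [mul_inv_lt_iff₀ (by linarith : (0:ℝ) < 1 - r * t)] at him
  linarith [him]
end
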